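/- arXiv:1106.6079 — 5 statements merged into one kernel-verified Lean document; each statement's English description precedes it below -/
import Mathlib

section
/- For every regular fractional ideal b of O and every canonical ideal c of O, one has λ((c : b)·Ō / (c : b)) = λ(b / (b : Ō)). (Lemma 2.11) -/
/-- The length of the `O`-module `A ⧸ B` (the supremum of lengths of chains of
`O`-submodules of the quotient). -/
noncomputable def olen (O : Type) {K : Type} [CommRing O] [CommRing K] [Algebra O K]
    (A B : Submodule O K) : WithBot (WithTop ℕ) :=
  Order.krullDim (Submodule O (↥A ⧸ (Submodule.comap A.subtype B)))

/-- `b` is a fractional ideal of `O` in `K`: a nonzero `O`-submodule of `K` admitting a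
regular denominator in `O`. -/
def IsFracIdeal {O K : Type} [CommRing O] [CommRing K] [Algebra O K]
    (b : Submodule O K) : Prop :=
  b ≠ ⊥ ∧ ∃ x ∈ nonZeroDivisors O, ∀ z ∈ b, x • z ∈ (1 : Submodule O K)

/-- `b` is a regular fractional ideal of `O`: a fractional ideal with `b · K = K`. -/
def IsRegularFrac {O K : Type} [CommRing O] [CommRing K] [Algebra O K]
    (b : Submodule O K) : Prop :=
  IsFracIdeal b ∧ Submodule.span K (b : Set K) = ⊤

/-- `c` is a canonical ideal of `O`: a regular fractional ideal with `a = c : (c : a)` for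
every regular fractional ideal `a`. -/
def IsCanonicalCM {O K : Type} [CommRing O] [CommRing K] [Algebra O K]
    (c : Submodule O K) : Prop :=
  IsRegularFrac c ∧ ∀ a : Submodule O K, IsRegularFrac a → a = c / (c / a)

/-- `b` is self-dual: `b = c : b` for some canonical ideal `c`. -/
def IsSelfDualCM {O K : Type} [CommRing O] [CommRing K] [Algebra O K]
    (b : Submodule O K) : Prop :=
  ∃ c : Submodule O K, IsCanonicalCM c ∧ b = c / b

section Aux

variable {O K : Type} [CommRing O] [CommRing K] [Algebra O K]

/-- `a` admits a regular denominator. -/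
def HasDen (a : Submodule O K) : Prop :=
  ∃ x ∈ nonZeroDivisors O, ∀ z ∈ a, x • z ∈ (1 : Submodule O K)

lemma hasDen_of_le {a b : Submodule O K} (h : a ≤ b) (hb : HasDen b) : HasDen a := by
  obtain ⟨x, hx, hxd⟩ := hb
  exact ⟨x, hx, fun z hz => hxd z (h hz)⟩

lemma hasDen_mul {d e : Submodule O K} (hd : HasDen d) (he : HasDen e) : HasDen (d * e) := by
  obtain ⟨x, hx, hxd⟩ := hd
  obtain ⟨y, hy, hyd⟩ := he
  refine ⟨x * y, mul_mem hx hy, fun z hz => ?_⟩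
  have h2 : z ∈ Submodule.comap (LinearMap.mulLeft O (algebraMap O K (x * y)))
      (1 : Submodule O K) := by
    refine Submodule.mul_le.mpr (fun m hm n hn => ?_) hz
    obtain ⟨om, hom⟩ := Submodule.mem_one.mp (hxd m hm)
    obtain ⟨on', hon⟩ := Submodule.mem_one.mp (hyd n hn)
    simp only [Submodule.mem_comap, LinearMap.mulLeft_apply, SetLike.mem_coe]
    refine Submodule.mem_one.mpr ⟨om * on', ?_⟩
    rw [map_mul, map_mul]
    rw [Algebra.smul_def] at hom hon
    rw [hom, hon]; ring
  rw [Algebra.smul_def]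
  simpa [map_mul, mul_assoc] using h2

lemma hasDen_div {c b : Submodule O K} (hc : HasDen c) {s : O}
    (hs : s ∈ nonZeroDivisors O) (hsb : algebraMap O K s ∈ b) : HasDen (c / b) := by
  obtain ⟨y, hy, hyd⟩ := hc
  refine ⟨y * s, mul_mem hy hs, fun z hz => ?_⟩
  have h1 : z * algebraMap O K s ∈ c := Submodule.mem_div_iff_forall_mul_mem.mp hz _ hsb
  have h2 := hyd _ h1
  rw [Algebra.smul_def] at h2 ⊢
  rw [map_mul]
  convert h2 using 1
  ring

lemma hasDen_of_fg [IsLocalization (nonZeroDivisors O) K] {a : Submodule O K}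
    (ha : a.FG) : HasDen a := by
  obtain ⟨T, hT⟩ := ha
  obtain ⟨x, hx⟩ := IsLocalization.exist_integer_multiples (nonZeroDivisors O) T (id : K → K)
  refine ⟨(x : O), x.2, fun z hz => ?_⟩
  have h2 : z ∈ Submodule.comap (LinearMap.mulLeft O (algebraMap O K (x : O)))
      (1 : Submodule O K) := by
    rw [← hT] at hz
    refine Submodule.span_le.mpr (fun m hm => ?_) hz
    obtain ⟨om, hom⟩ := hx m hm
    simp only [Submodule.mem_comap, LinearMap.mulLeft_apply, SetLike.mem_coe]
    exact Submodule.mem_one.mpr ⟨om, by rwa [Algebra.smul_def, id] at hom⟩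
  rw [Algebra.smul_def]
  simpa using h2

lemma exists_regular_mem [IsLocalization (nonZeroDivisors O) K] {b : Submodule O K}
    (hspan : Submodule.span K (b : Set K) = ⊤) :
    ∃ s ∈ nonZeroDivisors O, algebraMap O K s ∈ b := by
  have h1 : (1 : K) ∈ Submodule.span K (b : Set K) := by rw [hspan]; trivial
  obtain ⟨f, hsupp, hsum⟩ := Submodule.mem_span_set.mp h1
  obtain ⟨x, hx⟩ := IsLocalization.exist_integer_multiples (nonZeroDivisors O)
    f.support (fun i => f i)
  refine ⟨(x : O), x.2, ?_⟩
  have h2 : algebraMap O K (x : O) = (x : O) • (1 : K) := by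
    rw [Algebra.smul_def, mul_one]
  rw [h2, ← hsum, Finsupp.smul_sum]
  refine Submodule.sum_mem _ (fun i hi => ?_)
  obtain ⟨oi, hoi⟩ := hx i hi
  have hib : i ∈ b := hsupp hi
  show (x : O) • (f i • i) ∈ b
  have h3 : (x : O) • (f i • i) = oi • i := by
    rw [← smul_assoc, ← hoi, algebraMap_smul]
  rw [h3]
  exact Submodule.smul_mem _ _ hib

lemma transfer_reg [IsLocalization (nonZeroDivisors O) K] {c a : Submodule O K} {t : O}
    (ht : t ∈ nonZeroDivisors O) (h : ∀ z ∈ c, algebraMap O K t * z ∈ a)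
    (hcne : c ≠ ⊥) (hcspan : Submodule.span K (c : Set K) = ⊤) :
    a ≠ ⊥ ∧ Submodule.span K (a : Set K) = ⊤ := by
  have hu : IsUnit (algebraMap O K t) := IsLocalization.map_units K ⟨t, ht⟩
  obtain ⟨v, hv⟩ := hu
  constructor
  · obtain ⟨z0, hz0c, hz0⟩ := Submodule.exists_mem_ne_zero_of_ne_bot hcne
    refine (Submodule.ne_bot_iff _).mpr ⟨algebraMap O K t * z0, h z0 hz0c, fun h0 => ?_⟩
    exact hz0 ((IsUnit.mul_right_eq_zero ⟨v, hv⟩).mp h0)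
  · have h1 : (1 : K) ∈ Submodule.span K (a : Set K) := by
      have hm : (1 : K) ∈ Submodule.span K (c : Set K) := by rw [hcspan]; trivial
      obtain ⟨f, hsupp, hsum⟩ := Submodule.mem_span_set.mp hm
      rw [← hsum]
      rw [Finsupp.sum]
      refine Submodule.sum_mem _ (fun i hi => ?_)
      have hic : i ∈ c := hsupp hi
      have hia : algebraMap O K t * i ∈ a := h i hic
      have h3 : f i • i = (f i * (↑v⁻¹ : K)) • ((↑v : K) * i) := by
        rw [smul_eq_mul, smul_eq_mul]
        calc f i * i = f i * (((↑v⁻¹ : K) * ↑v) * i) := by rw [Units.inv_mul, one_mul]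
          _ = f i * ↑v⁻¹ * (↑v * i) := by ring
      rw [h3]
      refine Submodule.smul_mem _ _ (Submodule.subset_span ?_)
      rw [hv]
      exact hia
    rw [eq_top_iff]
    intro x _
    have h4 : x = x • (1 : K) := by rw [smul_eq_mul, mul_one]
    rw [h4]
    exact Submodule.smul_mem _ _ h1

lemma myDivMulEq (c d e : Submodule O K) : c / (d * e) = c / d / e := by
  ext x
  simp only [Submodule.mem_div_iff_forall_mul_mem]
  constructor
  · intro hx z hz y hy
    have := hx _ (Submodule.mul_mem_mul hy hz)
    convert this using 1; ring
  · intro hx w hw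
    refine Submodule.mul_induction_on hw (fun m hm n hn => ?_) (fun w1 w2 h1 h2 => ?_)
    · have := hx n hn m hm
      convert this using 1; ring
    · rw [mul_add]; exact add_mem h1 h2

lemma myDivLeDiv {a a' : Submodule O K} (c : Submodule O K) (h : a ≤ a') : c / a' ≤ c / a := by
  intro x hx
  rw [Submodule.mem_div_iff_forall_mul_mem] at hx ⊢
  exact fun y hy => hx y (h hy)

/-- The interval iso. -/
noncomputable def intervalIso (A B : Submodule O K) (h : B ≤ A) :
    {q : Submodule O ↥A // Submodule.comap A.subtype B ≤ q} ≃o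
      {D : Submodule O K // B ≤ D ∧ D ≤ A} where
  toFun q := ⟨Submodule.map A.subtype q.1, by
    constructor
    · have h1 : B = Submodule.map A.subtype (Submodule.comap A.subtype B) := by
        rw [Submodule.map_comap_subtype]
        exact (inf_eq_right.mpr h).symm
      exact h1.trans_le (Submodule.map_mono q.2)
    · exact Submodule.map_subtype_le A q.1⟩
  invFun D := ⟨Submodule.comap A.subtype D.1, Submodule.comap_mono D.2.1⟩
  left_inv q := Subtype.ext (Submodule.comap_map_eq_of_injective A.injective_subtype q.1)
  right_inv D := Subtype.ext (by
    simp only [Submodule.map_comap_subtype]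
    exact inf_eq_right.mpr D.2.2)
  map_rel_iff' {q q'} := Submodule.map_le_map_iff_of_injective A.injective_subtype _ _

lemma olen_eq_krullDim (A B : Submodule O K) (h : B ≤ A) :
    olen O A B = Order.krullDim {D : Submodule O K // B ≤ D ∧ D ≤ A} := by
  unfold olen
  exact Order.krullDim_eq_of_orderIso
    ((Submodule.comapMkQRelIso (Submodule.comap A.subtype B)).trans (intervalIso A B h))

end Aux

theorem statement_0 (k O K : Type) [Field k] [PerfectField k]
    [CommRing O] [IsNoetherianRing O] [IsLocalRing O] [Algebra k O]
    [CommRing K] [Algebra O K] [IsLocalization (nonZeroDivisors O) K]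
    [Algebra k K] [IsScalarTower k O K]
    (hdim : ringKrullDim O = 1)
    (hCM : ∃ x ∈ IsLocalRing.maximalIdeal O, x ∈ nonZeroDivisors O)
    (hfin : Module.Finite O (integralClosure O K))
    (OB : Submodule O K) (hOB : OB = Subalgebra.toSubmodule (integralClosure O K))
    (b : Submodule O K) (hb : IsRegularFrac b)
    (c : Submodule O K) (hc : IsCanonicalCM c) :
    olen O ((c / b) * OB) (c / b) = olen O b (b / OB) := by
  classical
  -- basic data
  have hcne : c ≠ ⊥ := hc.1.1.1
  have hcden : HasDen c := hc.1.1.2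
  have hbden : HasDen b := hb.1.2
  obtain ⟨s, hs, hsb⟩ := exists_regular_mem (O := O) hb.2
  have hOB1 : (1 : K) ∈ OB := by
    rw [hOB]
    exact (Subalgebra.mem_toSubmodule _).mpr (one_mem _)
  have hOBfg : OB.FG := by
    rw [hOB]
    exact Module.Finite.iff_fg.mp hfin
  have hOBden : HasDen OB := hasDen_of_fg hOBfg
  -- interval bounds
  have hB1leA1 : c / b ≤ c / b * OB := by
    intro z hz
    have := Submodule.mul_mem_mul hz hOB1
    rwa [mul_one] at this
  have hB2leA2 : b / OB ≤ b := by
    intro z hz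
    have := Submodule.mem_div_iff_forall_mul_mem.mp hz 1 hOB1
    rwa [mul_one] at this
  -- key dualities
  have hE1 : c / (c / b) = b := (hc.2 b hb).symm
  have hdual : c / (c / b * OB) = b / OB := by rw [myDivMulEq, hE1]
  -- nonvanishing and regularity of the bottom of interval 1
  obtain ⟨xb, hxb, hxbd⟩ := hbden
  have hcbmem : ∀ z ∈ c, algebraMap O K xb * z ∈ c / b := by
    intro z hz
    rw [Submodule.mem_div_iff_forall_mul_mem]
    intro y hy
    obtain ⟨o, ho⟩ := Submodule.mem_one.mp (hxbd y hy)
    rw [Algebra.smul_def] at ho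
    have h4 : algebraMap O K xb * z * y = o • z := by
      rw [Algebra.smul_def, ho]; ring
    rw [h4]
    exact c.smul_mem o hz
  obtain ⟨hcbne, hcbspan⟩ := transfer_reg hxb hcbmem hcne hc.1.2
  -- nonvanishing and regularity of the bottom of interval 2
  obtain ⟨tB, htB, htBd⟩ := hOBden
  have hbOBmem : ∀ z ∈ b, algebraMap O K tB * z ∈ b / OB := by
    intro z hz
    rw [Submodule.mem_div_iff_forall_mul_mem]
    intro y hy
    obtain ⟨o, ho⟩ := Submodule.mem_one.mp (htBd y hy)
    rw [Algebra.smul_def] at ho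
    have h4 : algebraMap O K tB * z * y = o • z := by
      rw [Algebra.smul_def, ho]; ring
    rw [h4]
    exact b.smul_mem o hz
  obtain ⟨hbOBne, hbOBspan⟩ := transfer_reg htB hbOBmem hb.1.1 hb.2
  -- denominators for the tops
  have hA1den : HasDen (c / b * OB) :=
    hasDen_mul (hasDen_div hcden hs hsb) ⟨tB, htB, htBd⟩
  -- every module in the intervals is regular fractional
  have hregI1 : ∀ D : Submodule O K, c / b ≤ D → D ≤ c / b * OB → IsRegularFrac D := by
    intro D h1 h2
    refine ⟨⟨fun hD0 => hcbne (le_bot_iff.mp (hD0 ▸ h1)), hasDen_of_le h2 hA1den⟩, ?_⟩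
    rw [eq_top_iff, ← hcbspan]
    exact Submodule.span_mono h1
  have hregI2 : ∀ D : Submodule O K, b / OB ≤ D → D ≤ b → IsRegularFrac D := by
    intro D h1 h2
    refine ⟨⟨fun hD0 => hbOBne (le_bot_iff.mp (hD0 ▸ h1)), hasDen_of_le h2 ⟨xb, hxb, hxbd⟩⟩, ?_⟩
    rw [eq_top_iff, ← hbOBspan]
    exact Submodule.span_mono h1
  have hregA1 : IsRegularFrac (c / b * OB) := hregI1 _ hB1leA1 le_rfl
  have hE2 : c / (b / OB) = c / b * OB := by
    rw [← hdual]
    exact (hc.2 _ hregA1).symm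
  -- round trips
  have hrt1 : ∀ D : Submodule O K, c / b ≤ D → D ≤ c / b * OB → c / (c / D) = D :=
    fun D h1 h2 => (hc.2 D (hregI1 D h1 h2)).symm
  have hrt2 : ∀ D : Submodule O K, b / OB ≤ D → D ≤ b → c / (c / D) = D :=
    fun D h1 h2 => (hc.2 D (hregI2 D h1 h2)).symm
  -- the duality order isomorphism
  have hmap1 : ∀ D : Submodule O K, c / b ≤ D → D ≤ c / b * OB →
      b / OB ≤ c / D ∧ c / D ≤ b := by
    intro D h1 h2
    constructor
    · rw [← hdual]; exact myDivLeDiv c h2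
    · rw [← hE1]; exact myDivLeDiv c h1
  have hmap2 : ∀ D : Submodule O K, b / OB ≤ D → D ≤ b →
      c / b ≤ c / D ∧ c / D ≤ c / b * OB := by
    intro D h1 h2
    constructor
    · exact myDivLeDiv c h2
    · rw [← hE2]; exact myDivLeDiv c h1
  let e : {D : Submodule O K // c / b ≤ D ∧ D ≤ c / b * OB} ≃o
      ({D : Submodule O K // b / OB ≤ D ∧ D ≤ b})ᵒᵈ :=
    { toFun := fun D => OrderDual.toDual ⟨c / D.1, hmap1 D.1 D.2.1 D.2.2⟩
      invFun := fun E => ⟨c / (OrderDual.ofDual E).1,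
        hmap2 (OrderDual.ofDual E).1 (OrderDual.ofDual E).2.1 (OrderDual.ofDual E).2.2⟩
      left_inv := fun D => Subtype.ext (hrt1 D.1 D.2.1 D.2.2)
      right_inv := fun E =>
        Subtype.ext (hrt2 (OrderDual.ofDual E).1 (OrderDual.ofDual E).2.1
          (OrderDual.ofDual E).2.2)
      map_rel_iff' := by
        intro D D'
        change OrderDual.toDual (⟨c / D.1, _⟩ : {D : Submodule O K // b / OB ≤ D ∧ D ≤ b}) ≤
          OrderDual.toDual ⟨c / D'.1, _⟩ ↔ D ≤ D'
        simp only [OrderDual.toDual_le_toDual, Subtype.mk_le_mk]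
        constructor
        · intro hle
          have h5 := myDivLeDiv c hle
          rw [hrt1 D.1 D.2.1 D.2.2, hrt1 D'.1 D'.2.1 D'.2.2] at h5
          exact h5
        · intro h
          exact myDivLeDiv c h }
  rw [olen_eq_krullDim _ _ hB1leA1, olen_eq_krullDim _ _ hB2leA2]
  rw [Order.krullDim_eq_of_orderIso e]
  exact Order.krullDim_orderDual
end

section
/- Let a and b be regular fractional ideals of O with b ⊆ a, let c be a canonical ideal of O, and set a* := c : a and b* := c : b. Then b ∩ a* ⊆ b* ∩ a and λ((b* ∩ a) / (b ∩ a*)) = λ(a / b). (Lemma 4.14) -/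
open Order


lemma aux_exists_pair (α : Type*) {β γ : Type*} [Preorder α] [PartialOrder β] [PartialOrder γ]
    (f : α → β) (g : α → γ) (hf : Monotone f) (hg : Monotone g)
    (h : ∀ x y : α, x < y → f x < f y ∨ g x < g y) :
    ∀ n (p : LTSeries α), p.length = n →
      ∃ (q : LTSeries β) (r : LTSeries γ),
        q.last = f p.last ∧ r.last = g p.last ∧ p.length ≤ q.length + r.length := by
  intro n
  induction n with
  | zero =>
    intro p hp
    exact ⟨RelSeries.singleton _ (f p.last), RelSeries.singleton _ (g p.last), rfl, rfl,
      by omega⟩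
  | succ n ih =>
    intro p hp
    have hlen' : p.eraseLast.length = n := by simp [hp]
    have hstep : p.eraseLast.last < p.last :=
      p.eraseLast_last_rel_last (by omega)
    obtain ⟨q, r, hq, hr, hlen⟩ := ih p.eraseLast hlen'
    rcases h _ _ hstep with hfl | hgl
    · rcases (hg hstep.le).lt_or_eq with hgl | hge
      · exact ⟨q.snoc (f p.last) (hq ▸ hfl), r.snoc (g p.last) (hr ▸ hgl),
          RelSeries.last_snoc _ _ _, RelSeries.last_snoc _ _ _,
          by simp only [RelSeries.snoc_length]; omega⟩
      · exact ⟨q.snoc (f p.last) (hq ▸ hfl), r, RelSeries.last_snoc _ _ _, hr.trans hge,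
          by simp only [RelSeries.snoc_length]; omega⟩
    · rcases (hf hstep.le).lt_or_eq with hfl | hfe
      · exact ⟨q.snoc (f p.last) (hq ▸ hfl), r.snoc (g p.last) (hr ▸ hgl),
          RelSeries.last_snoc _ _ _, RelSeries.last_snoc _ _ _,
          by simp only [RelSeries.snoc_length]; omega⟩
      · exact ⟨q, r.snoc (g p.last) (hr ▸ hgl), hq.trans hfe, RelSeries.last_snoc _ _ _,
          by simp only [RelSeries.snoc_length]; omega⟩

/-- Subadditivity of Krull dimension along a pair of "jointly strict" monotone maps. -/
lemma aux_krullDim_le_add {α β γ : Type*} [Preorder α] [PartialOrder β] [PartialOrder γ]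
    (f : α → β) (g : α → γ) (hf : Monotone f) (hg : Monotone g)
    (h : ∀ x y : α, x < y → f x < f y ∨ g x < g y) :
    krullDim α ≤ krullDim β + krullDim γ := by
  refine iSup_le fun p => ?_
  obtain ⟨q, r, -, -, hlen⟩ := aux_exists_pair α f g hf hg h p.length p rfl
  calc (p.length : WithBot ℕ∞) ≤ ((q.length + r.length : ℕ) : WithBot ℕ∞) := by
        exact_mod_cast Nat.cast_le.mpr hlen
    _ = (q.length : WithBot ℕ∞) + (r.length : WithBot ℕ∞) := by
        push_cast; rfl
    _ ≤ krullDim β + krullDim γ :=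
        add_le_add (LTSeries.length_le_krullDim q) (LTSeries.length_le_krullDim r)

lemma aux_add_le_krullDim_Icc {α : Type*} [PartialOrder α] {z y x : α}
    (hzy : z ≤ y) (hyx : y ≤ x) :
    krullDim (Set.Icc z y) + krullDim (Set.Icc y x) ≤ krullDim (Set.Icc z x) := by
  have hY : y ∈ Set.Icc z x := ⟨hzy, hyx⟩
  set Y : Set.Icc z x := ⟨y, hY⟩ with hYdef
  have h1 : krullDim (Set.Icc z y) ≤ ((Order.height Y : ℕ∞) : WithBot ℕ∞) := by
    refine iSup_le fun p => ?_
    set ι : Set.Icc z y → Set.Icc z x := fun w => ⟨w.1, w.2.1, w.2.2.trans hyx⟩ with hι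
    have hmono : StrictMono ι := fun _ _ hw => hw
    have hlast : (p.map ι hmono).last ≤ Y := by
      rw [LTSeries.last_map]
      exact Subtype.mk_le_mk.mpr p.last.2.2
    have := Order.length_le_height hlast
    rw [LTSeries.map_length] at this
    exact_mod_cast WithBot.coe_le_coe.mpr (le_trans (by exact_mod_cast le_refl _) this)
  have h2 : krullDim (Set.Icc y x) ≤ ((Order.coheight Y : ℕ∞) : WithBot ℕ∞) := by
    refine iSup_le fun p => ?_
    set ι : Set.Icc y x → Set.Icc z x := fun w => ⟨w.1, hzy.trans w.2.1, w.2.2⟩ with hι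
    have hmono : StrictMono ι := fun _ _ hw => hw
    have hhead : Y ≤ (p.map ι hmono).head := by
      rw [LTSeries.head_map]
      exact Subtype.mk_le_mk.mpr p.head.2.1
    have := Order.length_le_coheight hhead
    rw [LTSeries.map_length] at this
    exact_mod_cast WithBot.coe_le_coe.mpr (le_trans (by exact_mod_cast le_refl _) this)
  haveI : Nonempty (Set.Icc z x) := ⟨Y⟩
  calc krullDim (Set.Icc z y) + krullDim (Set.Icc y x)
      ≤ ((Order.height Y : ℕ∞) : WithBot ℕ∞) + ((Order.coheight Y : ℕ∞) : WithBot ℕ∞) :=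
        add_le_add h1 h2
    _ = ((Order.height Y + Order.coheight Y : ℕ∞) : WithBot ℕ∞) := by rw [WithBot.coe_add]
    _ ≤ krullDim (Set.Icc z x) := by
        rw [krullDim_eq_iSup_height_add_coheight_of_nonempty]
        exact WithBot.coe_le_coe.mpr (le_iSup (fun a => Order.height a + Order.coheight a) Y)

lemma aux_krullDim_Icc_add {α : Type*} [Lattice α] [IsModularLattice α] {z y x : α}
    (hzy : z ≤ y) (hyx : y ≤ x) :
    krullDim (Set.Icc z x) = krullDim (Set.Icc z y) + krullDim (Set.Icc y x) := by
  refine le_antisymm ?_ (aux_add_le_krullDim_Icc hzy hyx)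
  set f : Set.Icc z x → Set.Icc z y := fun w => ⟨w.1 ⊓ y, le_inf w.2.1 hzy, inf_le_right⟩ with hf
  set g : Set.Icc z x → Set.Icc y x := fun w => ⟨w.1 ⊔ y, le_sup_right, sup_le w.2.2 hyx⟩ with hg
  have hfm : Monotone f := fun u v huv => Subtype.mk_le_mk.mpr (inf_le_inf_right y huv)
  have hgm : Monotone g := fun u v huv => Subtype.mk_le_mk.mpr (sup_le_sup_right (Subtype.coe_le_coe.mpr huv) y)
  refine aux_krullDim_le_add f g hfm hgm ?_
  intro u v huv
  by_contra hcon
  push_neg at hcon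
  obtain ⟨h1, h2⟩ := hcon
  have e2 : u.1 ⊔ y = v.1 ⊔ y := by
    have := (hgm huv.le).eq_of_not_lt h2
    exact congrArg Subtype.val this
  have e1' : u.1 ⊓ y = v.1 ⊓ y := by
    have := (hfm huv.le).eq_of_not_lt h1
    exact congrArg Subtype.val this
  have : v.1 = u.1 := by
    calc v.1 = v.1 ⊓ (v.1 ⊔ y) := by rw [inf_sup_self]
      _ = v.1 ⊓ (u.1 ⊔ y) := by rw [e2]
      _ = (u.1 ⊔ y) ⊓ v.1 := inf_comm _ _
      _ = u.1 ⊔ (y ⊓ v.1) := sup_inf_assoc_of_le y (Subtype.coe_le_coe.mpr huv.le)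
      _ = u.1 ⊔ (v.1 ⊓ y) := by rw [inf_comm]
      _ = u.1 ⊔ (u.1 ⊓ y) := by rw [e1']
      _ = u.1 := sup_inf_self
  exact huv.ne (Subtype.ext this.symm)

lemma aux_olen_eq_icc (O K : Type) [CommRing O] [CommRing K] [Algebra O K]
    (A B : Submodule O K) (h : B ≤ A) :
    olen O A B = krullDim (Set.Icc B A) := by
  set p := Submodule.comap A.subtype B with hp
  have e1 : Submodule O (↥A ⧸ p) ≃o { q : Submodule O ↥A // p ≤ q } :=
    Submodule.comapMkQRelIso p
  have e2 : { q : Submodule O ↥A // p ≤ q } ≃o Set.Icc B A := by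
    refine ⟨⟨fun q => ⟨Submodule.map A.subtype q.1, ?_, ?_⟩,
      fun x => ⟨Submodule.comap A.subtype x.1, ?_⟩, ?_, ?_⟩, ?_⟩
    · -- B ≤ map A.subtype q
      have : B = Submodule.map A.subtype p := by
        rw [hp, Submodule.map_comap_subtype, inf_eq_right.mpr h]
      rw [this]
      exact Submodule.map_mono q.2
    · -- map A.subtype q ≤ A
      exact Submodule.map_subtype_le A q.1
    · -- p ≤ comap A.subtype x
      exact Submodule.comap_mono x.2.1
    · -- left inverse
      intro q
      ext1
      exact Submodule.comap_map_eq_of_injective A.injective_subtype q.1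
    · -- right inverse
      intro x
      ext1
      show Submodule.map A.subtype (Submodule.comap A.subtype x.1) = x.1
      rw [Submodule.map_comap_subtype, inf_eq_right.mpr x.2.2]
    · -- map_rel_iff
      intro q q'
      simp only [Equiv.coe_fn_mk, Subtype.mk_le_mk, Subtype.coe_le_coe]
      exact ⟨fun hh => (Submodule.map_le_map_iff_of_injective A.injective_subtype _ _).mp hh,
        fun hh => Submodule.map_mono hh⟩
  rw [olen, krullDim_eq_of_orderIso (e1.trans e2)]



section Alg
variable {O K : Type} [CommRing O] [CommRing K] [Algebra O K]
  [IsLocalization (nonZeroDivisors O) K]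

lemma aux_span_top_of_unit_mem {x : Submodule O K} {u : K} (hu : u ∈ x) (hunit : IsUnit u) :
    Submodule.span K (x : Set K) = ⊤ := by
  rw [eq_top_iff]
  intro w _
  obtain ⟨v, hv⟩ := hunit.exists_left_inv
  have : w = (w * v) • u := by
    rw [smul_eq_mul, mul_assoc, hv, mul_one]
  rw [this]
  exact Submodule.smul_mem _ _ (Submodule.subset_span hu)

lemma aux_exists_unit_mem {x : Submodule O K} (hx : Submodule.span K (x : Set K) = ⊤) :
    ∃ u ∈ x, IsUnit u := by
  have h1 : (1 : K) ∈ Submodule.span K (x : Set K) := hx ▸ Submodule.mem_top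
  rw [Submodule.mem_span_set] at h1
  obtain ⟨cf, hsupp, hsum⟩ := h1
  obtain ⟨s, hs⟩ := IsLocalization.exist_integer_multiples (nonZeroDivisors O) cf.support
    (fun i => cf i)
  refine ⟨algebraMap O K s, ?_, IsLocalization.map_units K s⟩
  have : algebraMap O K s = (s : O) • (1 : K) := (Algebra.algebraMap_eq_smul_one _)
  rw [this, ← hsum, Finsupp.smul_sum]
  refine Submodule.sum_mem _ fun i hi => ?_
  obtain ⟨oi, hoi⟩ := hs i hi
  show (s : O) • (cf i • i) ∈ x
  have heq : (s : O) • (cf i • i) = oi • i := by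
    rw [smul_eq_mul, ← smul_mul_assoc, ← hoi, ← Algebra.smul_def]
  rw [heq]
  exact Submodule.smul_mem _ _ (hsupp hi)

end Alg

section Alg2
variable {O K : Type} [CommRing O] [CommRing K] [Algebra O K]
  [IsLocalization (nonZeroDivisors O) K]

omit [IsLocalization (nonZeroDivisors O) K] in
lemma aux_div_antitone {c x y : Submodule O K} (hxy : x ≤ y) : c / y ≤ c / x := by
  intro z hz
  rw [Submodule.mem_div_iff_forall_mul_mem] at hz ⊢
  exact fun w hw => hz w (hxy hw)

omit [IsLocalization (nonZeroDivisors O) K] in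
lemma aux_div_sup (c s t : Submodule O K) : c / (s ⊔ t) = (c / s) ⊓ (c / t) := by
  refine le_antisymm (le_inf (aux_div_antitone le_sup_left) (aux_div_antitone le_sup_right)) ?_
  intro z hz
  rw [Submodule.mem_div_iff_forall_mul_mem]
  intro w hw
  rw [Submodule.mem_sup] at hw
  obtain ⟨u, hu, v, hv, rfl⟩ := hw
  rw [mul_add]
  exact Submodule.add_mem _ (Submodule.mem_div_iff_forall_mul_mem.mp hz.1 u hu)
    (Submodule.mem_div_iff_forall_mul_mem.mp hz.2 v hv)

variable [Nontrivial O]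

include O in
lemma aux_nontrivial_K : Nontrivial K := by
  refine ⟨0, 1, fun h => ?_⟩
  have := IsLocalization.injective K (le_refl (nonZeroDivisors O))
  exact zero_ne_one (this (by rw [map_zero, map_one]; exact h))

lemma aux_div_regular {c x : Submodule O K} (hc : IsRegularFrac c) (hx : IsRegularFrac x) :
    IsRegularFrac (c / x) := by
  haveI : Nontrivial K := aux_nontrivial_K (O := O)
  obtain ⟨⟨hcne, e, he, hec⟩, hcspan⟩ := hc
  obtain ⟨⟨hxne, d, hd, hdx⟩, hxspan⟩ := hx
  obtain ⟨t, htc, htu⟩ := aux_exists_unit_mem hcspan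
  obtain ⟨u, hux, huu⟩ := aux_exists_unit_mem hxspan
  -- the unit w = algebraMap d * t belongs to c / x
  have hw : algebraMap O K d * t ∈ c / x := by
    rw [Submodule.mem_div_iff_forall_mul_mem]
    intro z hz
    obtain ⟨o, ho⟩ := (Submodule.mem_one).mp (hdx z hz)
    have : algebraMap O K d * t * z = o • t := by
      rw [Algebra.smul_def, ho, Algebra.smul_def]; ring
    rw [this]
    exact Submodule.smul_mem _ _ htc
  have hwu : IsUnit (algebraMap O K d * t) :=
    (IsLocalization.map_units K (⟨d, hd⟩ : nonZeroDivisors O)).mul htu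
  have hspan : Submodule.span K ((c / x : Submodule O K) : Set K) = ⊤ :=
    aux_span_top_of_unit_mem hw hwu
  refine ⟨⟨?_, ?_⟩, hspan⟩
  · intro hbot
    rw [hbot, Submodule.mem_bot] at hw
    exact hwu.ne_zero hw
  · -- denominator
    obtain ⟨o₂, ho₂⟩ := (Submodule.mem_one).mp (hdx u hux)
    have ho₂u : IsUnit (algebraMap O K o₂) := by
      rw [ho₂, Algebra.smul_def]
      exact (IsLocalization.map_units K (⟨d, hd⟩ : nonZeroDivisors O)).mul huu
    have ho₂nzd : o₂ ∈ nonZeroDivisors O := by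
      rw [mem_nonZeroDivisors_iff_right]
      intro y hy
      have hinj := IsLocalization.injective K (le_refl (nonZeroDivisors O))
      apply hinj
      rw [map_zero]
      have h0 : algebraMap O K y * algebraMap O K o₂ = 0 := by rw [← map_mul, hy, map_zero]
      exact (IsUnit.mul_left_eq_zero ho₂u).mp h0
    refine ⟨e * o₂, mul_mem he ho₂nzd, ?_⟩
    intro z hz
    have hz' : z * u ∈ c := Submodule.mem_div_iff_forall_mul_mem.mp hz u hux
    obtain ⟨o₃, ho₃⟩ := (Submodule.mem_one).mp (hec _ hz')
    have : (e * o₂) • z = algebraMap O K (d * o₃) := by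
      calc (e * o₂) • z = e • (o₂ • z) := mul_smul e o₂ z
        _ = e • (algebraMap O K o₂ * z) := by rw [Algebra.smul_def o₂ z]
        _ = e • ((d • u) * z) := by rw [ho₂]
        _ = e • (d • (z * u)) := by rw [smul_mul_assoc, mul_comm u z]
        _ = d • (e • (z * u)) := smul_comm e d _
        _ = d • algebraMap O K o₃ := by rw [ho₃]
        _ = algebraMap O K (d * o₃) := by rw [Algebra.smul_def, ← map_mul]
    rw [this]
    exact (Submodule.mem_one).mpr ⟨d * o₃, rfl⟩

end Alg2


section Alg3
variable {O K : Type} [CommRing O] [CommRing K] [Algebra O K]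
  [IsLocalization (nonZeroDivisors O) K]

omit [IsLocalization (nonZeroDivisors O) K] in
lemma aux_sup_regular {x y : Submodule O K} (hx : IsRegularFrac x) (hy : IsRegularFrac y) :
    IsRegularFrac (x ⊔ y) := by
  obtain ⟨⟨hxne, d, hd, hdx⟩, hxspan⟩ := hx
  obtain ⟨⟨hyne, e, he, hey⟩, hyspan⟩ := hy
  refine ⟨⟨?_, d * e, mul_mem hd he, ?_⟩, ?_⟩
  · intro hbot
    exact hxne (le_bot_iff.mp (hbot ▸ le_sup_left))
  · intro z hz
    rw [Submodule.mem_sup] at hz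
    obtain ⟨u, hu, v, hv, rfl⟩ := hz
    rw [smul_add]
    refine Submodule.add_mem _ ?_ ?_
    · rw [mul_comm, mul_smul]
      exact Submodule.smul_mem _ _ (hdx u hu)
    · rw [mul_smul]
      exact Submodule.smul_mem _ _ (hey v hv)
  · rw [eq_top_iff, ← hxspan]
    exact Submodule.span_mono (show (x : Set K) ⊆ _ from le_sup_left (a := x) (b := y))

omit [IsLocalization (nonZeroDivisors O) K] in
lemma aux_between_regular {b x a : Submodule O K} (hb : IsRegularFrac b) (ha : IsRegularFrac a)
    (h1 : b ≤ x) (h2 : x ≤ a) : IsRegularFrac x := by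
  obtain ⟨⟨hbne, _, _, _⟩, hbspan⟩ := hb
  obtain ⟨⟨hane, d, hd, hda⟩, haspan⟩ := ha
  refine ⟨⟨?_, d, hd, fun z hz => hda z (h2 hz)⟩, ?_⟩
  · intro hbot
    exact hbne (le_bot_iff.mp (hbot ▸ h1))
  · rw [eq_top_iff, ← hbspan]
    exact Submodule.span_mono (show (b : Set K) ⊆ _ from h1)

variable [Nontrivial O]

lemma aux_dual_dim {c u v : Submodule O K} (hc : IsCanonicalCM c)
    (hu : IsRegularFrac u) (hv : IsRegularFrac v) (huv : u ≤ v) :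
    Order.krullDim (Set.Icc u v) = Order.krullDim (Set.Icc (c / v) (c / u)) := by
  have hreg : ∀ w, u ≤ w → w ≤ v → IsRegularFrac w :=
    fun w h1 h2 => aux_between_regular hu hv h1 h2
  have hrefl : ∀ w : Submodule O K, IsRegularFrac w → c / (c / w) = w :=
    fun w hw => (hc.2 w hw).symm
  have hcu : IsRegularFrac (c / u) := aux_div_regular hc.1 hu
  have hcv : IsRegularFrac (c / v) := aux_div_regular hc.1 hv
  have hreg' : ∀ w, c / v ≤ w → w ≤ c / u → IsRegularFrac w :=
    fun w h1 h2 => aux_between_regular hcv hcu h1 h2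
  have e : Set.Icc u v ≃o (Set.Icc (c / v) (c / u))ᵒᵈ := by
    refine ⟨⟨fun x => OrderDual.toDual
        ⟨c / x.1, aux_div_antitone x.2.2, aux_div_antitone x.2.1⟩,
      fun y => ⟨c / (OrderDual.ofDual y).1,
        le_trans (le_of_eq (hrefl u hu).symm) (aux_div_antitone (OrderDual.ofDual y).2.2),
        le_trans (aux_div_antitone (OrderDual.ofDual y).2.1) (le_of_eq (hrefl v hv))⟩,
      ?_, ?_⟩, ?_⟩
    · intro x
      exact Subtype.ext (hrefl x.1 (hreg x.1 x.2.1 x.2.2))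
    · intro y
      apply OrderDual.toDual.injective
      exact Subtype.ext (hrefl _ (hreg' _ (OrderDual.ofDual y).2.1 (OrderDual.ofDual y).2.2))
    · intro x x'
      constructor
      · intro hle
        have hle' : c / x'.1 ≤ c / x.1 := hle
        have := aux_div_antitone (c := c) hle'
        rw [hrefl x.1 (hreg x.1 x.2.1 x.2.2), hrefl x'.1 (hreg x'.1 x'.2.1 x'.2.2)] at this
        exact this
      · intro hle
        exact aux_div_antitone hle
  rw [Order.krullDim_eq_of_orderIso e, Order.krullDim_orderDual]

end Alg3

theorem statement_3 (k O K : Type) [Field k] [PerfectField k]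
    [CommRing O] [IsNoetherianRing O] [IsLocalRing O] [Algebra k O]
    [CommRing K] [Algebra O K] [IsLocalization (nonZeroDivisors O) K]
    [Algebra k K] [IsScalarTower k O K]
    (hdim : ringKrullDim O = 1)
    (hCM : ∃ x ∈ IsLocalRing.maximalIdeal O, x ∈ nonZeroDivisors O)
    (hfin : Module.Finite O (integralClosure O K))
    (OB : Submodule O K) (hOB : OB = Subalgebra.toSubmodule (integralClosure O K))
    (a : Submodule O K) (ha : IsRegularFrac a)
    (b : Submodule O K) (hb : IsRegularFrac b) (hba : b ≤ a)
    (c : Submodule O K) (hc : IsCanonicalCM c) :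
    b ⊓ (c / a) ≤ (c / b) ⊓ a ∧ olen O ((c / b) ⊓ a) (b ⊓ (c / a)) = olen O a b := by
  haveI : Nontrivial O := inferInstance
  have hsub : c / a ≤ c / b := aux_div_antitone hba
  refine ⟨le_inf (le_trans inf_le_right hsub) (le_trans inf_le_left hba), ?_⟩
  have hastar : IsRegularFrac (c / a) := aux_div_regular hc.1 ha
  have hbstar : IsRegularFrac (c / b) := aux_div_regular hc.1 hb
  have hrefl : ∀ w : Submodule O K, IsRegularFrac w → c / (c / w) = w :=
    fun w hw => (hc.2 w hw).symm
  have hZY₂ : b ⊓ (c / a) ≤ b ⊓ (c / b) := inf_le_inf_left b hsub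
  have hY₂X : b ⊓ (c / b) ≤ (c / b) ⊓ a := le_inf inf_le_right (le_trans inf_le_left hba)
  have hbY₁ : b ≤ (a ⊓ (c / b)) ⊔ b := le_sup_right
  have hY₁a : (a ⊓ (c / b)) ⊔ b ≤ a := sup_le inf_le_left hba
  have hY₁reg : IsRegularFrac ((a ⊓ (c / b)) ⊔ b) := aux_between_regular hb ha hbY₁ hY₁a
  have elow : (a ⊓ (c / b)) ⊓ b = b ⊓ (c / b) := by
    rw [inf_right_comm, inf_eq_right.mpr hba]
  have piece1 : Order.krullDim (Set.Icc (b ⊓ (c / b)) ((c / b) ⊓ a))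
      = Order.krullDim (Set.Icc b ((a ⊓ (c / b)) ⊔ b)) := by
    have e := infIccOrderIsoIccSup (a ⊓ (c / b)) b
    rw [elow] at e
    rw [show (c / b) ⊓ a = a ⊓ (c / b) from inf_comm _ _]
    exact Order.krullDim_eq_of_orderIso e
  have hZeq : (b ⊓ (c / b)) ⊓ (c / a) = b ⊓ (c / a) := by
    rw [inf_assoc, inf_eq_right.mpr hsub]
  have hw : IsRegularFrac ((c / a) ⊔ b) := aux_sup_regular hastar hb
  have hcw : c / ((c / a) ⊔ b) = a ⊓ (c / b) := by rw [aux_div_sup, hrefl a ha]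
  have hclaim1 : c / (a ⊓ (c / b)) = (c / a) ⊔ b := by rw [← hcw, hrefl _ hw]
  have hcY₁ : c / ((a ⊓ (c / b)) ⊔ b) = (c / a) ⊔ (b ⊓ (c / b)) := by
    rw [aux_div_sup, hclaim1, sup_inf_assoc_of_le b hsub]
  have piece2 : Order.krullDim (Set.Icc (b ⊓ (c / a)) (b ⊓ (c / b)))
      = Order.krullDim (Set.Icc ((a ⊓ (c / b)) ⊔ b) a) := by
    have e := infIccOrderIsoIccSup (b ⊓ (c / b)) (c / a)
    rw [hZeq] at e
    have hd := aux_dual_dim hc hY₁reg ha hY₁a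
    rw [hcY₁] at hd
    rw [hd, sup_comm (c / a) (b ⊓ (c / b))]
    exact Order.krullDim_eq_of_orderIso e
  rw [aux_olen_eq_icc O K ((c / b) ⊓ a) (b ⊓ (c / a)) (le_trans hZY₂ hY₂X),
      aux_olen_eq_icc O K a b hba,
      aux_krullDim_Icc_add hZY₂ hY₂X,
      aux_krullDim_Icc_add hbY₁ hY₁a,
      piece1, piece2, add_comm]
end

section
/- Assume k is infinite. Let b be a fractional ideal of O and let v ∈ ℤ^r. Then there exists z ∈ b∖{0} with v(z) = v if and only if J^b(v) ≠ J^b(v + e_i) for every i ∈ {1, …, r}. (Lemma 3.1) -/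
/-- The dimension over `k` of the quotient `A / B` of two `O`-submodules of `K`,
viewed as `k`-vector spaces. -/
noncomputable def qdim (k : Type) {O K : Type} [Field k] [CommRing O] [CommRing K]
    [Algebra k O] [Algebra O K] [Algebra k K] [IsScalarTower k O K]
    (A B : Submodule O K) : ℕ :=
  Module.finrank k
    (↥(Submodule.restrictScalars k A) ⧸
      (Submodule.comap (Submodule.restrictScalars k A).subtype (Submodule.restrictScalars k B)))

/-- The `i`-th component of the value vector `v(a)` of a (fractional) ideal `a`:
the minimum of `v i` over the nonzero elements of `a`. -/
noncomputable def idealVal {O K : Type} [CommRing O] [CommRing K] [Algebra O K] {r : ℕ}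
    (v : Fin r → K → ℤ) (a : Submodule O K) (i : Fin r) : ℤ :=
  sInf {n : ℤ | ∃ z ∈ a, z ≠ 0 ∧ v i z = n}

/-- `γ^b := v(b : Ō) - v(b·Ō)`. -/
noncomputable def gammaB {O K : Type} [CommRing O] [CommRing K] [Algebra O K] {r : ℕ}
    (v : Fin r → K → ℤ) (Obar b : Submodule O K) : Fin r → ℤ :=
  fun i => idealVal v (b / Obar) i - idealVal v (b * Obar) i

/-- `c` is a canonical ideal of `O`: a fractional ideal with `a = c : (c : a)` for every
fractional ideal `a`. -/
def IsCanonicalIdeal {O K : Type} [CommRing O] [CommRing K] [Algebra O K]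
    (c : Submodule O K) : Prop :=
  IsFracIdeal c ∧ ∀ a : Submodule O K, IsFracIdeal a → a = c / (c / a)

/-- `b` is self-dual: `b = c : b` for some canonical ideal `c`. -/
def IsSelfDual {O K : Type} [CommRing O] [CommRing K] [Algebra O K]
    (b : Submodule O K) : Prop :=
  ∃ c : Submodule O K, IsCanonicalIdeal c ∧ b = c / b

/-- The value set `S(b) = { v(z) - v(b·Ō) | z ∈ b \ {0} }`. -/
def Sset {O K : Type} [CommRing O] [CommRing K] [Algebra O K] {r : ℕ}
    (v : Fin r → K → ℤ) (Obar b : Submodule O K) : Set (Fin r → ℤ) :=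
  {w | ∃ z ∈ b, z ≠ 0 ∧ w = fun i => v i z - idealVal v (b * Obar) i}

/-- `Δ(n) = Δ_1(n) ∪ ⋯ ∪ Δ_r(n)` for a subset `S ⊆ ℤ^r`. -/
def Delta {r : ℕ} (S : Set (Fin r → ℤ)) (n : Fin r → ℤ) : Set (Fin r → ℤ) :=
  {σ | σ ∈ S ∧ ∃ i, σ i = n i ∧ ∀ j, j ≠ i → n j < σ j}

/-- `S ⊆ ℤ^r` is symmetric if there is `τ` with `w ∈ S ↔ Δ(τ - w) = ∅` for all `w`. -/
def IsSymmetricSet {r : ℕ} (S : Set (Fin r → ℤ)) : Prop :=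
  ∃ τ : Fin r → ℤ, ∀ w : Fin r → ℤ, w ∈ S ↔ Delta S (τ - w) = ∅


private lemma bad_subsingleton {k K : Type} [Field k] [Field K] [Module k K]
    (vi : K → ℤ)
    (hadd : ∀ x y : K, x ≠ 0 → y ≠ 0 → x + y ≠ 0 → min (vi x) (vi y) ≤ vi (x + y))
    (hsmul : ∀ (c : k) (x : K), c ≠ 0 → x ≠ 0 → vi (c • x) = vi x)
    (hsmul0 : ∀ (c : k) (x : K), c ≠ 0 → x ≠ 0 → c • x ≠ 0)
    (hneg : ∀ x : K, x ≠ 0 → vi (-x) = vi x)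
    (z z' : K) (hz : z ≠ 0) (hz' : z' ≠ 0) (wi : ℤ)
    (h1 : wi ≤ vi z) (h2 : wi ≤ vi z')
    (h3 : vi z = wi ∨ vi z' = wi) :
    {c : k | z + c • z' = 0 ∨ wi < vi (z + c • z')}.Subsingleton := by
  intro c hc c' hc'
  by_contra hne
  have hcc : c - c' ≠ 0 := sub_ne_zero.mpr hne
  set y := z + c • z' with hy_def
  set y' := z + c' • z' with hy'_def
  have hd : y - y' = (c - c') • z' := by
    rw [sub_smul, hy_def, hy'_def]; abel
  have hd0 : y - y' ≠ 0 := by rw [hd]; exact hsmul0 _ _ hcc hz'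
  have hdv : vi (y - y') = vi z' := by rw [hd, hsmul _ _ hcc hz']
  -- we will show wi < vi z and wi < vi z', contradicting h3
  suffices hfin : wi < vi z ∧ wi < vi z' by omega
  by_cases hy0 : y = 0
  · -- then y' ≠ 0 and wi < vi y'
    have hy'0 : y' ≠ 0 := by intro h0; exact hd0 (by rw [hy0, h0, sub_zero])
    have hlt : wi < vi y' := hc'.resolve_left hy'0
    have hz'lt : wi < vi z' := by
      have : vi (y - y') = vi y' := by rw [hy0, zero_sub, hneg _ hy'0]
      omega
    have hc0 : c ≠ 0 := by
      intro h0; rw [hy_def, h0, zero_smul, add_zero] at hy0; exact hz hy0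
    have hzeq : z = -(c • z') := by
      have : z + c • z' = 0 := hy0
      linear_combination this
    have : vi z = vi z' := by
      rw [hzeq, hneg _ (hsmul0 _ _ hc0 hz'), hsmul _ _ hc0 hz']
    exact ⟨by omega, hz'lt⟩
  · by_cases hy'0 : y' = 0
    · have hlt : wi < vi y := hc.resolve_left hy0
      have hz'lt : wi < vi z' := by
        have : vi (y - y') = vi y := by rw [hy'0, sub_zero]
        omega
      have hc'0 : c' ≠ 0 := by
        intro h0; rw [hy'_def, h0, zero_smul, add_zero] at hy'0; exact hz hy'0
      have hzeq : z = -(c' • z') := by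
        have : z + c' • z' = 0 := hy'0
        linear_combination this
      have : vi z = vi z' := by
        rw [hzeq, hneg _ (hsmul0 _ _ hc'0 hz'), hsmul _ _ hc'0 hz']
      exact ⟨by omega, hz'lt⟩
    · have hlt : wi < vi y := hc.resolve_left hy0
      have hlt' : wi < vi y' := hc'.resolve_left hy'0
      have hz'lt : wi < vi z' := by
        have hmin := hadd y (-y') hy0 (neg_ne_zero.mpr hy'0)
          (by rw [← sub_eq_add_neg]; exact hd0)
        rw [← sub_eq_add_neg, hdv, hneg _ hy'0] at hmin
        exact lt_of_lt_of_le (lt_min hlt hlt') hmin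
      have hzlt : wi < vi z := by
        by_cases hc0 : c = 0
        · have hyz : y = z := by rw [hy_def, hc0, zero_smul, add_zero]
          rw [← hyz]; exact hlt
        · have hcz : c • z' ≠ 0 := hsmul0 _ _ hc0 hz'
          have hyz : y + -(c • z') = z := by rw [hy_def]; ring
          have hmin := hadd y (-(c • z')) hy0 (neg_ne_zero.mpr hcz)
            (by rw [hyz]; exact hz)
          rw [hyz, hneg _ hcz, hsmul _ _ hc0 hz'] at hmin
          exact lt_of_lt_of_le (lt_min hlt hz'lt) hmin
      exact ⟨hzlt, hz'lt⟩

theorem statement_9 (k O K : Type) [Field k] [PerfectField k]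
    [Infinite k]
    [CommRing O] [IsDomain O] [IsNoetherianRing O] [IsLocalRing O] [Algebra k O]
    [Field K] [Algebra O K] [IsFractionRing O K] [Algebra k K] [IsScalarTower k O K]
    (hdim : ringKrullDim O = 1)
    (hfin : Module.Finite O (integralClosure O K))
    (OB : Submodule O K) (hOB : OB = Subalgebra.toSubmodule (integralClosure O K))
    (r : ℕ) (M : Fin r → Ideal (integralClosure O K))
    (hMmax : ∀ i, (M i).IsMaximal)
    (hMinj : Function.Injective M)
    (hMall : ∀ P : Ideal (integralClosure O K), P.IsMaximal → ∃ i, P = M i)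
    (v : Fin r → K → ℤ)
    (hvmul : ∀ (i : Fin r) (x y : K), x ≠ 0 → y ≠ 0 → v i (x * y) = v i x + v i y)
    (hvadd : ∀ (i : Fin r) (x y : K), x ≠ 0 → y ≠ 0 → x + y ≠ 0 →
      min (v i x) (v i y) ≤ v i (x + y))
    (hvsurj : ∀ (i : Fin r) (n : ℤ), ∃ x : K, x ≠ 0 ∧ v i x = n)
    (hvint : ∀ x : K, x ≠ 0 → (x ∈ integralClosure O K ↔ ∀ i, 0 ≤ v i x))
    (hvmax : ∀ (i : Fin r) (x : K) (hx : x ∈ integralClosure O K), x ≠ 0 →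
      ((⟨x, hx⟩ : integralClosure O K) ∈ M i ↔ 1 ≤ v i x))
    (d : Fin r → ℕ) (hd : ∀ i, d i = Module.finrank k ((integralClosure O K) ⧸ M i))
    (hres : ∀ i, Function.Surjective (algebraMap k ((integralClosure O K) ⧸ M i)))
    (J : Submodule O K → (Fin r → ℤ) → Submodule O K)
    (hJ : ∀ (a : Submodule O K) (w : Fin r → ℤ) (z : K),
      z ∈ J a w ↔ z ∈ a ∧ (z = 0 ∨ ∀ i, w i ≤ v i z))
    (b : Submodule O K) (hb : IsFracIdeal b) :
    ∀ w : Fin r → ℤ,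
      (∃ z : K, z ∈ b ∧ z ≠ 0 ∧ ∀ i, v i z = w i) ↔
        ∀ i : Fin r, J b w ≠ J b (w + Pi.single i 1) := by
  intro w
  -- basic valuation facts
  have hone : ∀ i, v i (1 : K) = 0 := by
    intro i
    have := hvmul i 1 1 one_ne_zero one_ne_zero
    rw [mul_one] at this; omega
  have hkinj : Function.Injective (algebraMap k K) := (algebraMap k K).injective
  have hkne : ∀ c : k, c ≠ 0 → algebraMap k K c ≠ 0 := by
    intro c hc h0
    exact hc (hkinj (by rw [h0, map_zero]))
  have hmapint : ∀ c : k, algebraMap k K c ∈ integralClosure O K := by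
    intro c
    rw [IsScalarTower.algebraMap_apply k O K]
    exact Subalgebra.algebraMap_mem _ _
  have hvk : ∀ (i : Fin r) (c : k), c ≠ 0 → v i (algebraMap k K c) = 0 := by
    intro i c hc
    have hc1 := hkne c hc
    have hc2 := hkne c⁻¹ (inv_ne_zero hc)
    have h1 : 0 ≤ v i (algebraMap k K c) := ((hvint _ hc1).mp (hmapint c)) i
    have h2 : 0 ≤ v i (algebraMap k K c⁻¹) := ((hvint _ hc2).mp (hmapint c⁻¹)) i
    have h3 := hvmul i _ _ hc1 hc2
    have h4 : algebraMap k K c * algebraMap k K c⁻¹ = 1 := by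
      rw [← map_mul, mul_inv_cancel₀ hc, map_one]
    rw [h4, hone i] at h3
    omega
  have hsmul0 : ∀ (c : k) (x : K), c ≠ 0 → x ≠ 0 → c • x ≠ 0 := by
    intro c x hc hx
    rw [Algebra.smul_def]
    exact mul_ne_zero (hkne c hc) hx
  have hsmulv : ∀ (i : Fin r) (c : k) (x : K), c ≠ 0 → x ≠ 0 → v i (c • x) = v i x := by
    intro i c x hc hx
    rw [Algebra.smul_def, hvmul i _ _ (hkne c hc) hx, hvk i c hc, zero_add]
  have hnegone : ∀ i, v i (-1 : K) = 0 := by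
    intro i
    have := hvmul i (-1) (-1) (by norm_num) (by norm_num)
    rw [neg_mul_neg, one_mul, hone i] at this; omega
  have hnegv : ∀ (i : Fin r) (x : K), x ≠ 0 → v i (-x) = v i x := by
    intro i x hx
    have : (-x : K) = -1 * x := by ring
    rw [this, hvmul i _ _ (by norm_num) hx, hnegone i, zero_add]
  have hsmulb : ∀ (c : k) (x : K), x ∈ b → c • x ∈ b := by
    intro c x hx
    rw [← algebraMap_smul O c x]
    exact b.smul_mem _ hx
  constructor
  · rintro ⟨z, hzb, hz0, hvz⟩ i heq
    have h1 : z ∈ J b w := (hJ b w z).mpr ⟨hzb, Or.inr fun i' => (hvz i').ge⟩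
    have h2 : z ∉ J b (w + Pi.single i 1) := by
      rw [hJ]
      rintro ⟨-, h | h⟩
      · exact hz0 h
      · have := h i
        simp only [Pi.add_apply, Pi.single_eq_same, hvz i] at this
        omega
    rw [heq] at h1
    exact h2 h1
  · intro h
    have hwit : ∀ i : Fin r, ∃ z : K, z ∈ b ∧ z ≠ 0 ∧ (∀ i', w i' ≤ v i' z) ∧ v i z = w i := by
      intro i
      have hmono : J b (w + Pi.single i 1) ≤ J b w := by
        intro z hz
        rw [hJ] at hz ⊢
        refine ⟨hz.1, hz.2.imp id fun hv i' => le_trans ?_ (hv i')⟩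
        simp only [Pi.add_apply, Pi.single_apply]
        split <;> omega
      have hne' : ¬ J b w ≤ J b (w + Pi.single i 1) :=
        fun hle => h i (le_antisymm hle hmono)
      obtain ⟨z, hz1, hz2⟩ := SetLike.not_le_iff_exists.mp hne'
      rw [hJ] at hz1
      obtain ⟨hzb, hz1'⟩ := hz1
      have hz0 : z ≠ 0 := by
        rintro rfl
        exact hz2 ((hJ b _ 0).mpr ⟨hzb, Or.inl rfl⟩)
      have hge : ∀ i', w i' ≤ v i' z := hz1'.resolve_left hz0
      have hnall : ¬ ∀ i', (w + Pi.single i 1 : Fin r → ℤ) i' ≤ v i' z :=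
        fun hall => hz2 ((hJ b _ z).mpr ⟨hzb, Or.inr hall⟩)
      push_neg at hnall
      obtain ⟨i', hi'⟩ := hnall
      have hii : i' = i := by
        by_contra hne2
        rw [Pi.add_apply, Pi.single_eq_of_ne hne2, add_zero] at hi'
        exact absurd (hge i') (not_le.mpr hi')
      subst hii
      rw [Pi.add_apply, Pi.single_eq_same] at hi'
      have := hge i'
      exact ⟨z, hzb, hz0, hge, by omega⟩
    have main : ∀ S : Finset (Fin r), ∃ z : K, z ∈ b ∧ z ≠ 0 ∧
        (∀ i, w i ≤ v i z) ∧ ∀ i ∈ S, v i z = w i := by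
      intro S
      induction S using Finset.induction_on with
      | empty =>
        rcases isEmpty_or_nonempty (Fin r) with he | hne
        · obtain ⟨z, hzb, hz0⟩ := (Submodule.ne_bot_iff b).mp hb.1
          exact ⟨z, hzb, hz0, fun i => isEmptyElim i, fun i _ => isEmptyElim i⟩
        · obtain ⟨i0⟩ := hne
          obtain ⟨z, hzb, hz0, hge, -⟩ := hwit i0
          exact ⟨z, hzb, hz0, hge, fun i hi => absurd hi (Finset.notMem_empty i)⟩
      | @insert j S hjS IH =>
        obtain ⟨z, hzb, hz0, hzge, hzS⟩ := IH
        obtain ⟨z', hz'b, hz'0, hz'ge, hz'j⟩ := hwit j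
        set Bad : Fin r → Set k := fun i => {c | z + c • z' = 0 ∨ w i < v i (z + c • z')}
          with hBad_def
        have hBi : ∀ i ∈ insert j S, (Bad i).Subsingleton := by
          intro i hi
          refine bad_subsingleton (v i) (hvadd i) (hsmulv i) hsmul0 (hnegv i)
            z z' hz0 hz'0 (w i) (hzge i) (hz'ge i) ?_
          rcases Finset.mem_insert.mp hi with rfl | hiS
          · exact Or.inr hz'j
          · exact Or.inl (hzS i hiS)
        have hfinBad : (⋃ i ∈ (↑(insert j S : Finset (Fin r)) : Set (Fin r)), Bad i).Finite :=
          Set.Finite.biUnion (Finset.finite_toSet _)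
            (fun i hi => ((hBi i (Finset.mem_coe.mp hi)).finite))
        obtain ⟨c, hc⟩ := hfinBad.infinite_compl.nonempty
        have hcT : ∀ i ∈ insert j S, c ∉ Bad i := by
          intro i hi hmem
          exact hc (Set.mem_biUnion (Finset.mem_coe.mpr hi) hmem)
        set y := z + c • z' with hy_def
        have hyne : y ≠ 0 := fun h0 =>
          hcT j (Finset.mem_insert_self j S) (Or.inl h0)
        have hyb : y ∈ b := b.add_mem hzb (hsmulb c z' hz'b)
        have hyge : ∀ i, w i ≤ v i y := by
          intro i
          by_cases hc0 : c = 0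
          · have : y = z := by rw [hy_def, hc0, zero_smul, add_zero]
            rw [this]; exact hzge i
          · have hmin := hvadd i z (c • z') hz0 (hsmul0 c z' hc0 hz'0) hyne
            have h2 : v i (c • z') = v i z' := hsmulv i c z' hc0 hz'0
            refine le_trans (le_min (hzge i) ?_) hmin
            rw [h2]; exact hz'ge i
        have hyeq : ∀ i ∈ insert j S, v i y = w i := by
          intro i hi
          have h1 : ¬ w i < v i y := fun hlt => hcT i hi (Or.inr hlt)
          have := hyge i
          omega
        exact ⟨y, hyb, hyne, hyge, hyeq⟩
    obtain ⟨z, h1, h2, h3, h4⟩ := main Finset.univ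
    exact ⟨z, h1, h2, fun i => h4 i (Finset.mem_univ i)⟩
end

section
/- Let b be a fractional ideal of O. Then: (a) 0 ≤ γ^b ≤ γ componentwise; (b) if b·Ō = Ō, then J^K(γ^b) ⊆ b, and every n ∈ ℤ^r with J^K(n) ⊆ b satisfies n ≥ γ^b componentwise (i.e., γ^b is the least n with J^K(n) ⊆ b). (Lemma 3.4) -/
section ValHelpers

variable {K : Type} [Field K] {r : ℕ} (v : Fin r → K → ℤ)
variable (hvmul : ∀ (i : Fin r) (x y : K), x ≠ 0 → y ≠ 0 → v i (x * y) = v i x + v i y)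
variable (hvadd : ∀ (i : Fin r) (x y : K), x ≠ 0 → y ≠ 0 → x + y ≠ 0 →
      min (v i x) (v i y) ≤ v i (x + y))

include hvmul

theorem myv_one (i : Fin r) : v i 1 = 0 := by
  have := hvmul i 1 1 one_ne_zero one_ne_zero
  simp at this; omega

theorem myv_neg (i : Fin r) (x : K) (hx : x ≠ 0) : v i (-x) = v i x := by
  have h1 : v i (-1 : K) = 0 := by
    have := hvmul i (-1) (-1) (by norm_num) (by norm_num)
    simp at this
    have := myv_one v hvmul i
    omega
  have := hvmul i (-1) x (by norm_num) hx
  simp at this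
  omega

theorem myv_pow (i : Fin r) (x : K) (hx : x ≠ 0) (m : ℕ) : v i (x ^ m) = m * v i x := by
  induction m with
  | zero => simpa using myv_one v hvmul i
  | succ m ih =>
    rw [pow_succ, hvmul i _ x (pow_ne_zero _ hx) hx, ih]
    push_cast; ring

include hvadd

theorem myv_add_eq (i : Fin r) (x y : K) (hx : x ≠ 0) (hy : y ≠ 0)
    (hlt : v i x < v i y) : x + y ≠ 0 ∧ v i (x + y) = v i x := by
  have hne : x + y ≠ 0 := by
    intro h
    have hxy : x = -y := add_eq_zero_iff_eq_neg.mp h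
    rw [hxy, myv_neg v hvmul i y hy] at hlt; omega
  refine ⟨hne, ?_⟩
  have h1 : min (v i x) (v i y) ≤ v i (x + y) := hvadd i x y hx hy hne
  have h2 : (x + y) + (-y) = x := by ring
  have h4 := hvadd i (x + y) (-y) hne (neg_ne_zero.mpr hy) (by rw [h2]; exact hx)
  rw [h2, myv_neg v hvmul i y hy] at h4
  omega

set_option linter.unusedSectionVars false in
/-- sum of terms all with valuation > c is zero or has valuation > c -/
theorem myv_sum_gt {ι : Type*} [DecidableEq ι] (i : Fin r) (c : ℤ) (s : Finset ι) (w : ι → K)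
    (h : ∀ l ∈ s, w l ≠ 0 ∧ c < v i (w l)) :
    (∑ l ∈ s, w l) = 0 ∨ ((∑ l ∈ s, w l) ≠ 0 ∧ c < v i (∑ l ∈ s, w l)) := by
  induction s using Finset.induction_on with
  | empty => simp
  | insert _ _ hns ih =>
    rename_i a t
    rw [Finset.sum_insert hns]
    have ha := h a (Finset.mem_insert_self a t)
    rcases ih (fun l hl => h l (Finset.mem_insert_of_mem hl)) with h0 | ⟨hne, hgt⟩
    · rw [h0, add_zero]; exact Or.inr ⟨ha.1, ha.2⟩
    · by_cases hz : w a + ∑ l ∈ t, w l = 0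
      · exact Or.inl hz
      · refine Or.inr ⟨hz, ?_⟩
        have := hvadd i (w a) (∑ l ∈ t, w l) ha.1 hne hz
        omega

theorem myv_sum {ι : Type*} [DecidableEq ι] (i : Fin r) (s : Finset ι) (w : ι → K) (j : ι)
    (hj : j ∈ s) (hj0 : w j ≠ 0)
    (h : ∀ l ∈ s, l ≠ j → w l ≠ 0 ∧ v i (w j) < v i (w l)) :
    (∑ l ∈ s, w l) ≠ 0 ∧ v i (∑ l ∈ s, w l) = v i (w j) := by
  have hsplit : (∑ l ∈ s, w l) = w j + ∑ l ∈ s.erase j, w l := by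
    rw [Finset.add_sum_erase _ _ hj]
  rcases myv_sum_gt v hvmul hvadd i (v i (w j)) (s.erase j) w
      (fun l hl => h l (Finset.mem_of_mem_erase hl) (Finset.ne_of_mem_erase hl)) with h0 | ⟨hne, hgt⟩
  · rw [hsplit, h0, add_zero]; exact ⟨hj0, rfl⟩
  · rw [hsplit]
    exact myv_add_eq v hvmul hvadd i (w j) _ hj0 hne hgt

end ValHelpers

theorem statement_11 (k O K : Type) [Field k] [PerfectField k]
    [CommRing O] [IsDomain O] [IsNoetherianRing O] [IsLocalRing O] [Algebra k O]
    [Field K] [Algebra O K] [IsFractionRing O K] [Algebra k K] [IsScalarTower k O K]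
    (hdim : ringKrullDim O = 1)
    (hfin : Module.Finite O (integralClosure O K))
    (OB : Submodule O K) (hOB : OB = Subalgebra.toSubmodule (integralClosure O K))
    (r : ℕ) (M : Fin r → Ideal (integralClosure O K))
    (hMmax : ∀ i, (M i).IsMaximal)
    (hMinj : Function.Injective M)
    (hMall : ∀ P : Ideal (integralClosure O K), P.IsMaximal → ∃ i, P = M i)
    (v : Fin r → K → ℤ)
    (hvmul : ∀ (i : Fin r) (x y : K), x ≠ 0 → y ≠ 0 → v i (x * y) = v i x + v i y)
    (hvadd : ∀ (i : Fin r) (x y : K), x ≠ 0 → y ≠ 0 → x + y ≠ 0 →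
      min (v i x) (v i y) ≤ v i (x + y))
    (hvsurj : ∀ (i : Fin r) (n : ℤ), ∃ x : K, x ≠ 0 ∧ v i x = n)
    (hvint : ∀ x : K, x ≠ 0 → (x ∈ integralClosure O K ↔ ∀ i, 0 ≤ v i x))
    (hvmax : ∀ (i : Fin r) (x : K) (hx : x ∈ integralClosure O K), x ≠ 0 →
      ((⟨x, hx⟩ : integralClosure O K) ∈ M i ↔ 1 ≤ v i x))
    (d : Fin r → ℕ) (hd : ∀ i, d i = Module.finrank k ((integralClosure O K) ⧸ M i))
    (J : Submodule O K → (Fin r → ℤ) → Submodule O K)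
    (hJ : ∀ (a : Submodule O K) (w : Fin r → ℤ) (z : K),
      z ∈ J a w ↔ z ∈ a ∧ (z = 0 ∨ ∀ i, w i ≤ v i z))
    (b : Submodule O K) (hb : IsFracIdeal b)
    (γb : Fin r → ℤ) (hγb : γb = gammaB v OB b) :
    ((0 : Fin r → ℤ) ≤ γb ∧ γb ≤ idealVal v ((1 : Submodule O K) / OB)) ∧
    (b * OB = OB →
      (J (⊤ : Submodule O K) γb ≤ b ∧
        ∀ n : Fin r → ℤ, J (⊤ : Submodule O K) n ≤ b → γb ≤ n)) := by
  subst hγb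
  have hOBmem : ∀ z : K, z ∈ OB ↔ z ∈ integralClosure O K := by
    intro z; rw [hOB]; exact Subalgebra.mem_toSubmodule _
  -- Lemma C': for each i, a unit-at-i element of the integral closure lying in all other M j
  have hu : ∀ i : Fin r, ∃ u : K, u ≠ 0 ∧ u ∈ integralClosure O K ∧ v i u = 0 ∧
      ∀ j, j ≠ i → 1 ≤ v j u := by
    intro i
    have hnotle : ¬ (∏ j ∈ Finset.univ.erase i, M j ≤ M i) := by
      rw [Ideal.IsPrime.prod_le (hMmax i).isPrime]
      rintro ⟨j, hj, hle⟩
      exact (Finset.ne_of_mem_erase hj)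
        (hMinj ((hMmax j).eq_of_le (hMmax i).ne_top hle))
    obtain ⟨u, huP, huM⟩ := SetLike.not_le_iff_exists.mp hnotle
    have hu0 : (u : K) ≠ 0 := by
      intro h
      have hz : u = 0 := by exact_mod_cast h
      exact huM (hz ▸ (M i).zero_mem)
    refine ⟨u, hu0, u.2, ?_, ?_⟩
    · have h1 : ¬ (1 ≤ v i (u : K)) := by
        intro h
        exact huM (by simpa using (hvmax i u u.2 hu0).mpr h)
      have h2 := (hvint _ hu0).mp u.2 i
      omega
    · intro j hji
      have humem : u ∈ M j := by
        have h3 : (∏ l ∈ Finset.univ.erase i, M l) ≤ M j :=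
          le_trans Ideal.prod_le_inf
            (Finset.inf_le (Finset.mem_erase.mpr ⟨hji, Finset.mem_univ j⟩))
        exact h3 huP
      exact (hvmax j u u.2 hu0).mp (by simpa using humem)
  -- Lemma A: approximation
  have happrox : ∀ (n : Fin r → ℤ) (i : Fin r), ∃ z : K, z ≠ 0 ∧ v i z = n i ∧
      ∀ j, n j ≤ v j z := by
    intro n i
    obtain ⟨x, hx0, hxv⟩ := hvsurj i (n i)
    obtain ⟨u, hu0, huR, hui, huj⟩ := hu i
    set m : ℕ := Finset.univ.sup fun j => (n j - v j x).toNat with hm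
    have hp0 : (u ^ m : K) ≠ 0 := pow_ne_zero _ hu0
    refine ⟨x * u ^ m, mul_ne_zero hx0 hp0, ?_, ?_⟩
    · rw [hvmul i x _ hx0 hp0, myv_pow v hvmul i u hu0 m, hui]
      omega
    · intro j
      rw [hvmul j x _ hx0 hp0, myv_pow v hvmul j u hu0 m]
      by_cases hji : j = i
      · subst hji; rw [hui]; omega
      · have h1 : 1 ≤ v j u := huj j hji
        have h2' : (n j - v j x).toNat ≤ m := by
          rw [hm]; exact Finset.le_sup (f := fun j => (n j - v j x).toNat) (Finset.mem_univ j)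
        have h2 : ((n j - v j x).toNat : ℤ) ≤ (m : ℤ) := Nat.cast_le.mpr h2'
        have h3 : n j - v j x ≤ ((n j - v j x).toNat : ℤ) := Int.self_le_toNat _
        have h4 : (m : ℤ) ≤ (m : ℤ) * v j u :=
          le_mul_of_one_le_right (by positivity) h1
        omega
  -- attainment of idealVal
  have attain : ∀ a : Submodule O K, (∃ z ∈ a, z ≠ 0) →
      (∃ c : Fin r → ℤ, ∀ z ∈ a, z ≠ 0 → ∀ i, c i ≤ v i z) → ∀ i,
      (∃ z ∈ a, z ≠ 0 ∧ v i z = idealVal v a i) ∧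
      (∀ z ∈ a, z ≠ 0 → idealVal v a i ≤ v i z) := by
    rintro a ⟨z0, hz0a, hz00⟩ ⟨c, hc⟩ i
    have hne : {n : ℤ | ∃ z ∈ a, z ≠ 0 ∧ v i z = n}.Nonempty :=
      ⟨v i z0, z0, hz0a, hz00, rfl⟩
    have hbdd : BddBelow {n : ℤ | ∃ z ∈ a, z ≠ 0 ∧ v i z = n} := by
      refine ⟨c i, ?_⟩
      rintro n ⟨z, hza, hz0, rfl⟩
      exact hc z hza hz0 i
    constructor
    · obtain ⟨z, hza, hz0, hv⟩ := Int.csInf_mem hne hbdd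
      exact ⟨z, hza, hz0, hv⟩
    · intro z hza hz0
      exact csInf_le hbdd ⟨z, hza, hz0, rfl⟩
  -- additive closure of lower bounds
  have haddcl : ∀ (c : Fin r → ℤ) (x y : K), (x = 0 ∨ ∀ i, c i ≤ v i x) →
      (y = 0 ∨ ∀ i, c i ≤ v i y) → (x + y = 0 ∨ ∀ i, c i ≤ v i (x + y)) := by
    intro c x y hx hy
    rcases hx with rfl | hx
    · simpa using hy
    rcases hy with rfl | hy
    · simpa using Or.inr hx
    by_cases hxy : x + y = 0
    · exact Or.inl hxy
    by_cases hx0 : x = 0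
    · subst hx0; simpa using Or.inr hy
    by_cases hy0 : y = 0
    · subst hy0; simpa using Or.inr hx
    refine Or.inr fun i => ?_
    have := hvadd i x y hx0 hy0 hxy
    have h1 := hx i; have h2 := hy i
    omega
  -- nonzero elements of b and its denominator
  obtain ⟨hbne, x, hxnz, hxden⟩ := hb
  obtain ⟨z0, hz0b, hz00⟩ := (Submodule.ne_bot_iff b).mp hbne
  have hx0 : algebraMap O K x ≠ 0 := by
    have := nonZeroDivisors.ne_zero hxnz
    simpa using fun h => this (IsFractionRing.injective O K (by simpa using h))
  -- elements of (1 : Submodule O K) are in the integral closure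
  have hone_int : ∀ z : K, z ∈ (1 : Submodule O K) → z ∈ integralClosure O K := by
    intro z hz
    obtain ⟨y, rfl⟩ := Submodule.mem_one.mp hz
    exact Subalgebra.algebraMap_mem _ y
  -- bound on b
  have hbd_b : ∀ z ∈ b, z ≠ 0 → ∀ i, -(v i (algebraMap O K x)) ≤ v i z := by
    intro z hzb hz0 i
    have h1 : algebraMap O K x * z ∈ integralClosure O K := by
      have := hxden z hzb
      rw [Algebra.smul_def] at this
      exact hone_int _ this
    have h2 : (0:ℤ) ≤ v i (algebraMap O K x * z) :=
      (hvint _ (mul_ne_zero hx0 hz0)).mp h1 i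
    rw [hvmul i _ _ hx0 hz0] at h2
    omega
  -- OB facts
  have hone_OB : (1 : K) ∈ OB := (hOBmem 1).mpr (one_mem _)
  have hOB_nonneg : ∀ z ∈ OB, z ≠ 0 → ∀ i, (0:ℤ) ≤ v i z := by
    intro z hz hz0 i
    exact (hvint z hz0).mp ((hOBmem z).mp hz) i
  have hOB_mul : ∀ u ∈ OB, ∀ w ∈ OB, u * w ∈ OB := by
    intro u hu' w hw
    exact (hOBmem _).mpr (mul_mem ((hOBmem u).mp hu') ((hOBmem w).mp hw))
  -- common denominator y0 for OB
  have hy0 : ∃ y0 : K, y0 ≠ 0 ∧ ∀ u ∈ OB, y0 * u ∈ (1 : Submodule O K) := by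
    obtain ⟨s, hs⟩ := Module.finite_def.mp hfin
    obtain ⟨y, hy⟩ := IsLocalization.exist_integer_multiples (nonZeroDivisors O) s
      (fun u : integralClosure O K => (u : K))
    have hy0' : algebraMap O K (y : O) ≠ 0 := by
      have := nonZeroDivisors.ne_zero y.2
      simpa using fun h => this (IsFractionRing.injective O K (by simpa using h))
    refine ⟨algebraMap O K (y : O), hy0', ?_⟩
    intro u huOB
    have huR : u ∈ integralClosure O K := (hOBmem u).mp huOB
    have hmem : (⟨u, huR⟩ : integralClosure O K) ∈ Submodule.span O (s : Set (integralClosure O K)) := by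
      rw [hs]; trivial
    have key : ∀ (w : integralClosure O K), w ∈ Submodule.span O (s : Set (integralClosure O K)) →
        algebraMap O K (y : O) * (w : K) ∈ (1 : Submodule O K) := by
      intro w hw
      induction hw using Submodule.span_induction with
      | mem g hg =>
        obtain ⟨o, ho⟩ := hy g hg
        rw [Algebra.smul_def] at ho
        exact Submodule.mem_one.mpr ⟨o, ho⟩
      | zero => simp
      | add w1 w2 hw1 hw2 ih1 ih2 =>
        push_cast
        rw [mul_add]
        exact add_mem ih1 ih2
      | smul o w hw ih =>
        have : ((o • w : integralClosure O K) : K) = o • (w : K) := rfl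
        rw [this, Algebra.smul_def, mul_left_comm, ← Algebra.smul_def]
        exact Submodule.smul_mem _ o ih
    exact key _ hmem
  obtain ⟨y0, hy00, hy0den⟩ := hy0
  -- basic containments
  have hdivsub : ∀ z ∈ b / OB, z ∈ b := by
    intro z hz
    have := Submodule.mem_div_iff_forall_mul_mem.mp hz 1 hone_OB
    simpa using this
  have hsubmul : ∀ z ∈ b, z ∈ b * OB := by
    intro z hz
    simpa using Submodule.mul_mem_mul hz hone_OB
  -- nonemptiness and bounds
  have hne_b : ∃ z ∈ b, z ≠ 0 := ⟨z0, hz0b, hz00⟩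
  have hbdE_b : ∃ c : Fin r → ℤ, ∀ z ∈ b, z ≠ 0 → ∀ i, c i ≤ v i z :=
    ⟨fun i => -(v i (algebraMap O K x)), hbd_b⟩
  have hne_div : ∃ z ∈ b / OB, z ≠ 0 := by
    refine ⟨y0 * z0, ?_, mul_ne_zero hy00 hz00⟩
    rw [Submodule.mem_div_iff_forall_mul_mem]
    intro w hw
    obtain ⟨o, ho⟩ := Submodule.mem_one.mp (hy0den w hw)
    have : y0 * z0 * w = o • z0 := by
      rw [Algebra.smul_def, ho]; ring
    rw [this]
    exact Submodule.smul_mem _ o hz0b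
  have hbdE_div : ∃ c : Fin r → ℤ, ∀ z ∈ b / OB, z ≠ 0 → ∀ i, c i ≤ v i z :=
    ⟨fun i => -(v i (algebraMap O K x)), fun z hz hz0 i => hbd_b z (hdivsub z hz) hz0 i⟩
  have hbd_mul : ∀ z ∈ b * OB, z = 0 ∨ ∀ i, -(v i (algebraMap O K x)) ≤ v i z := by
    intro z hz
    refine Submodule.mul_induction_on hz ?_ ?_
    · intro m hm n hn
      by_cases hm0 : m = 0
      · subst hm0; simp
      by_cases hn0 : n = 0
      · subst hn0; simp
      refine Or.inr fun i => ?_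
      rw [hvmul i m n hm0 hn0]
      have h1 := hbd_b m hm hm0 i
      have h2 := hOB_nonneg n hn hn0 i
      omega
    · intro x' y' hx' hy'
      exact haddcl _ x' y' hx' hy'
  have hne_mul : ∃ z ∈ b * OB, z ≠ 0 := ⟨z0, hsubmul z0 hz0b, hz00⟩
  have hbdE_mul : ∃ c : Fin r → ℤ, ∀ z ∈ b * OB, z ≠ 0 → ∀ i, c i ≤ v i z := by
    refine ⟨fun i => -(v i (algebraMap O K x)), fun z hz hz0 i => ?_⟩
    rcases hbd_mul z hz with rfl | h
    · exact absurd rfl hz0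
    · exact h i
  have hne_onediv : ∃ z ∈ (1 : Submodule O K) / OB, z ≠ 0 := by
    refine ⟨y0, ?_, hy00⟩
    rw [Submodule.mem_div_iff_forall_mul_mem]
    exact hy0den
  have hbdE_onediv : ∃ c : Fin r → ℤ, ∀ z ∈ (1 : Submodule O K) / OB, z ≠ 0 → ∀ i, c i ≤ v i z := by
    refine ⟨0, fun z hz hz0 i => ?_⟩
    have h1 : z ∈ (1 : Submodule O K) := by
      have := Submodule.mem_div_iff_forall_mul_mem.mp hz 1 hone_OB
      simpa using this
    exact (hvint z hz0).mp (hone_int z h1) i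
  -- stability under multiplication by OB
  have hstab_div : ∀ z ∈ b / OB, ∀ u ∈ integralClosure O K, z * u ∈ b / OB := by
    intro z hz u huR
    rw [Submodule.mem_div_iff_forall_mul_mem]
    intro w hw
    have : z * u * w = z * (u * w) := by ring
    rw [this]
    exact Submodule.mem_div_iff_forall_mul_mem.mp hz _ (hOB_mul u ((hOBmem u).mpr huR) w hw)
  have hstab_mul : ∀ z ∈ b * OB, ∀ u ∈ integralClosure O K, z * u ∈ b * OB := by
    intro z hz u huR
    have h1 : z * u ∈ (b * OB) * OB := Submodule.mul_mem_mul hz ((hOBmem u).mpr huR)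
    have h2 : (b * OB) * OB = b * OB := by
      rw [mul_assoc]
      congr 1
      apply le_antisymm
      · exact Submodule.mul_le.mpr fun m hm n hn => hOB_mul m hm n hn
      · intro w hw
        simpa using Submodule.mul_mem_mul hw hone_OB
    rwa [h2] at h1
  -- Lemma B: joint attainment for OB-stable submodules
  have hjoint : ∀ a : Submodule O K, (∀ z ∈ a, ∀ u ∈ integralClosure O K, z * u ∈ a) →
      (∃ z ∈ a, z ≠ 0) → (∃ c : Fin r → ℤ, ∀ z ∈ a, z ≠ 0 → ∀ i, c i ≤ v i z) →
      ∃ z ∈ a, z ≠ 0 ∧ ∀ i, v i z = idealVal v a i := by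
    intro a hstab hne hbd
    rcases Nat.eq_zero_or_pos r with hr | hr
    · obtain ⟨z, hz, h0⟩ := hne
      exact ⟨z, hz, h0, fun i => absurd i.isLt (by omega)⟩
    choose z hz using fun j => (attain a hne hbd j).1
    choose u hu0 huR hui huj using hu
    set w : Fin r → K := fun j => z j * u j with hw
    have hwa : ∀ j, w j ∈ a := fun j => hstab (z j) (hz j).1 (u j) (huR j)
    have hw0 : ∀ j, w j ≠ 0 := fun j => mul_ne_zero (hz j).2.1 (hu0 j)
    have hwv : ∀ j, v j (w j) = idealVal v a j := by
      intro j
      rw [hw]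
      simp only
      rw [hvmul j _ _ (hz j).2.1 (hu0 j), hui j, (hz j).2.2]
      ring
    have hwlt : ∀ i j, j ≠ i → v i (w i) < v i (w j) := by
      intro i j hji
      rw [hw]; simp only
      rw [hvmul i _ _ (hz i).2.1 (hu0 i), hvmul i _ _ (hz j).2.1 (hu0 j), hui i]
      have h1 := (attain a hne hbd i).2 (z j) (hz j).1 (hz j).2.1
      have h2 := huj j i (Ne.symm hji)
      have h3 := (hz i).2.2
      omega
    have hsum : ∀ i : Fin r, (∑ l, w l) ≠ 0 ∧ v i (∑ l, w l) = v i (w i) := by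
      intro i
      exact myv_sum v hvmul hvadd i Finset.univ w i (Finset.mem_univ i) (hw0 i)
        (fun l _ hl => ⟨hw0 l, hwlt i l hl⟩)
    have hi0 : (⟨0, hr⟩ : Fin r) = ⟨0, hr⟩ := rfl
    refine ⟨∑ l, w l, Submodule.sum_mem _ (fun l _ => hwa l), (hsum ⟨0, hr⟩).1, fun i => ?_⟩
    rw [(hsum i).2, hwv i]
  -- Lemma L: an OB-stable submodule contains everything above its value vector
  have hfull : ∀ a : Submodule O K, (∀ z ∈ a, ∀ u ∈ integralClosure O K, z * u ∈ a) →
      (∃ z ∈ a, z ≠ 0) → (∃ c : Fin r → ℤ, ∀ z ∈ a, z ≠ 0 → ∀ i, c i ≤ v i z) →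
      ∀ z : K, z ≠ 0 → (∀ i, idealVal v a i ≤ v i z) → z ∈ a := by
    intro a hstab hne hbd z hz0 hge
    obtain ⟨zB, hzBa, hzB0, hzBv⟩ := hjoint a hstab hne hbd
    have hq0 : z * zB⁻¹ ≠ 0 := mul_ne_zero hz0 (inv_ne_zero hzB0)
    have h1 : z * zB⁻¹ ∈ integralClosure O K := by
      rw [hvint _ hq0]
      intro i
      have heq : z * zB⁻¹ * zB = z := by field_simp
      have h2 : v i (z * zB⁻¹) + v i zB = v i z := by
        rw [← hvmul i _ zB hq0 hzB0, heq]
      have h3 := hge i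
      have h4 := hzBv i
      omega
    have h5 : zB * (z * zB⁻¹) ∈ a := hstab zB hzBa _ h1
    have h6 : zB * (z * zB⁻¹) = z := by field_simp
    rwa [h6] at h5
  -- value of OB is zero
  have hvalOB : ∀ i, idealVal v OB i = 0 := by
    intro i
    have hne_OB : ∃ z ∈ OB, z ≠ 0 := ⟨1, hone_OB, one_ne_zero⟩
    have hbdE_OB : ∃ c : Fin r → ℤ, ∀ z ∈ OB, z ≠ 0 → ∀ i, c i ≤ v i z :=
      ⟨0, fun z hz hz0 i => hOB_nonneg z hz hz0 i⟩
    have h1 := (attain OB hne_OB hbdE_OB i).2 1 hone_OB one_ne_zero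
    rw [myv_one v hvmul i] at h1
    obtain ⟨z, hza, hz0, hv⟩ := (attain OB hne_OB hbdE_OB i).1
    have h2 := hOB_nonneg z hza hz0 i
    omega
  refine ⟨⟨?_, ?_⟩, ?_⟩
  · -- 0 ≤ γb
    intro i
    simp only [gammaB, Pi.zero_apply]
    obtain ⟨z, hzdiv, hz0, hzv⟩ := (attain (b / OB) hne_div hbdE_div i).1
    have h1 : z ∈ b * OB := hsubmul z (hdivsub z hzdiv)
    have h2 := (attain (b * OB) hne_mul hbdE_mul i).2 z h1 hz0
    omega
  · -- γb ≤ γ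
    intro i
    simp only [gammaB]
    obtain ⟨xg, hxg, hxg0, hxgv⟩ := (attain ((1 : Submodule O K) / OB) hne_onediv hbdE_onediv i).1
    obtain ⟨yg, hyg, hyg0, hygv⟩ := (attain (b * OB) hne_mul hbdE_mul i).1
    have hxmul : ∀ w ∈ b * OB, xg * w ∈ b := by
      intro w hw
      refine Submodule.mul_induction_on hw ?_ ?_
      · intro m hm n hn
        obtain ⟨o, ho⟩ := Submodule.mem_one.mp
          (Submodule.mem_div_iff_forall_mul_mem.mp hxg n hn)
        have : xg * (m * n) = o • m := by
          rw [Algebra.smul_def, ho]; ring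
        rw [this]
        exact Submodule.smul_mem _ o hm
      · intro w1 w2 h1 h2
        have : xg * (w1 + w2) = xg * w1 + xg * w2 := by ring
        rw [this]
        exact add_mem h1 h2
    have hxy_div : xg * yg ∈ b / OB := by
      rw [Submodule.mem_div_iff_forall_mul_mem]
      intro w hw
      have h1 : yg * w ∈ b * OB := hstab_mul yg hyg w ((hOBmem w).mp hw)
      have : xg * yg * w = xg * (yg * w) := by ring
      rw [this]
      exact hxmul _ h1
    have h2 := (attain (b / OB) hne_div hbdE_div i).2 (xg * yg) hxy_div
      (mul_ne_zero hxg0 hyg0)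
    rw [hvmul i xg yg hxg0 hyg0] at h2
    omega
  · -- part (b)
    intro hbO
    have hval_mul : ∀ i, idealVal v (b * OB) i = 0 := by
      intro i; rw [hbO]; exact hvalOB i
    have hγ : ∀ i, gammaB v OB b i = idealVal v (b / OB) i := by
      intro i; simp only [gammaB, hval_mul i]; ring
    constructor
    · -- J ⊤ γb ≤ b
      intro z hz
      rw [hJ] at hz
      obtain ⟨-, hz2⟩ := hz
      by_cases hz0 : z = 0
      · subst hz0; exact zero_mem b
      rcases hz2 with rfl | hge
      · exact zero_mem b
      refine hdivsub z (hfull (b / OB) hstab_div hne_div hbdE_div z hz0 fun i => ?_)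
      have := hge i
      rw [hγ i] at this
      exact this
    · -- minimality
      intro n hn i
      obtain ⟨z, hz0, hzi, hzall⟩ := happrox n i
      have hzJ : ∀ w : K, w ≠ 0 → (∀ j, n j ≤ v j w) → w ∈ J ⊤ n := by
        intro w hw0 hwv
        rw [hJ]
        exact ⟨trivial, Or.inr hwv⟩
      have hzdiv : z ∈ b / OB := by
        rw [Submodule.mem_div_iff_forall_mul_mem]
        intro w hw
        by_cases hw0 : w = 0
        · subst hw0; simpa using zero_mem b
        have hzw0 : z * w ≠ 0 := mul_ne_zero hz0 hw0
        refine hn (hzJ (z * w) hzw0 fun j => ?_)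
        rw [hvmul j z w hz0 hw0]
        have h1 := hzall j
        have h2 := hOB_nonneg w hw hw0 j
        omega
      have h2 := (attain (b / OB) hne_div hbdE_div i).2 z hzdiv hz0
      rw [hγ i, ← hzi]
      exact h2
end

section
/- Let c be a canonical ideal of O normalized so that c : Ō = Ō. Then for every v ∈ ℤ^r one has c : J^K(v) = J^K(−v), and deg(J^K(v)) = δ − (d_1 v_1 + ⋯ + d_r v_r). (Lemma 4.15(b),(c)) -/
set_option linter.unusedSectionVars false
set_option linter.unusedVariables false
set_option maxHeartbeats 1000000

section Aux

variable {O K : Type} [CommRing O] [IsDomain O]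
  [Field K] [Algebra O K] [IsFractionRing O K]
variable {r : ℕ}

lemma aux_vpow' (v : Fin r → K → ℤ)
    (hvmul : ∀ (i : Fin r) (x y : K), x ≠ 0 → y ≠ 0 → v i (x * y) = v i x + v i y)
    (i : Fin r) (x : K) (hx : x ≠ 0) : ∀ n : ℕ, v i (x ^ n) = n * v i x := by
  intro n; induction n with
  | zero =>
      have h := hvmul i 1 1 one_ne_zero one_ne_zero
      rw [mul_one] at h
      simpa using (by omega : v i 1 = 0)
  | succ n ih =>
      rw [pow_succ, hvmul i _ x (pow_ne_zero n hx) hx, ih]; push_cast; ring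

lemma aux_exists_t (v : Fin r → K → ℤ)
    (M : Fin r → Ideal (integralClosure O K))
    (hMmax : ∀ i, (M i).IsMaximal) (hMinj : Function.Injective M)
    (hvint : ∀ x : K, x ≠ 0 → (x ∈ integralClosure O K ↔ ∀ i, 0 ≤ v i x))
    (hvmax : ∀ (i : Fin r) (x : K) (hx : x ∈ integralClosure O K), x ≠ 0 →
      ((⟨x, hx⟩ : integralClosure O K) ∈ M i ↔ 1 ≤ v i x))
    (i : Fin r) :
    ∃ t : integralClosure O K, (t : K) ≠ 0 ∧ v i (t : K) = 0 ∧
      ∀ j, j ≠ i → 1 ≤ v j (t : K) := by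
  have hcop : M i ⊔ ∏ j ∈ Finset.univ.erase i, M j = ⊤ := by
    apply Ideal.sup_prod_eq_top
    intro j hj
    exact Ideal.IsMaximal.coprime_of_ne (hMmax i) (hMmax j)
      (fun h => (Finset.mem_erase.mp hj).1 (hMinj h).symm)
  have h1 : (1 : integralClosure O K) ∈ M i ⊔ ∏ j ∈ Finset.univ.erase i, M j := by
    rw [hcop]; exact Submodule.mem_top
  obtain ⟨a, ha, b, hb, hab⟩ := Submodule.mem_sup.mp h1
  have h1i : (1 : integralClosure O K) ∉ M i := (hMmax i).1.1 ∘ (Ideal.eq_top_iff_one _).mpr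
  have hbi : b ∉ M i := fun h => h1i (hab ▸ (M i).add_mem ha h)
  have hb0 : (b : K) ≠ 0 := by
    intro h
    exact hbi (ZeroMemClass.coe_eq_zero.mp h ▸ (M i).zero_mem)
  refine ⟨b, hb0, ?_, ?_⟩
  · have h0 : 0 ≤ v i (b : K) := (hvint _ hb0).mp b.2 i
    have h1' : ¬ 1 ≤ v i (b : K) := fun h => hbi ((hvmax i (b : K) b.2 hb0).mpr h)
    omega
  · intro j hj
    have hbj : b ∈ M j :=
      (Ideal.prod_le_inf.trans (Finset.inf_le (Finset.mem_erase.mpr ⟨hj, Finset.mem_univ j⟩))) hb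
    exact (hvmax j (b : K) b.2 hb0).mp hbj

lemma aux_exists_exact (v : Fin r → K → ℤ)
    (M : Fin r → Ideal (integralClosure O K))
    (hvmul : ∀ (i : Fin r) (x y : K), x ≠ 0 → y ≠ 0 → v i (x * y) = v i x + v i y)
    (hvsurj : ∀ (i : Fin r) (n : ℤ), ∃ x : K, x ≠ 0 ∧ v i x = n)
    (i : Fin r)
    (ht : ∃ t : integralClosure O K, (t : K) ≠ 0 ∧ v i (t : K) = 0 ∧
      ∀ j, j ≠ i → 1 ≤ v j (t : K))
    (m : ℤ) (bound : Fin r → ℤ) :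
    ∃ z : K, z ≠ 0 ∧ v i z = m ∧ ∀ j, j ≠ i → bound j ≤ v j z := by
  obtain ⟨x, hx0, hxv⟩ := hvsurj i m
  obtain ⟨t, ht0, hti, htj⟩ := ht
  set N : ℕ := ∑ j, (bound j - v j x).natAbs with hN
  have htN : ((t : K) ^ N) ≠ 0 := pow_ne_zero _ ht0
  refine ⟨x * (t : K) ^ N, mul_ne_zero hx0 htN, ?_, ?_⟩
  · rw [hvmul i x _ hx0 htN, aux_vpow' v hvmul i _ ht0, hti, hxv]; ring
  · intro j hj
    rw [hvmul j x _ hx0 htN, aux_vpow' v hvmul j _ ht0]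
    have h1 : 1 ≤ v j (t : K) := htj j hj
    have h2 : (bound j - v j x).natAbs ≤ N := Finset.single_le_sum
      (f := fun j => (bound j - v j x).natAbs) (fun _ _ => Nat.zero_le _) (Finset.mem_univ j)
    have h3 : bound j - v j x ≤ (N : ℤ) := le_trans (Int.le_natAbs) (by exact_mod_cast h2)
    nlinarith [Int.ofNat_nonneg N]

lemma aux_exists_ge (v : Fin r → K → ℤ)
    (M : Fin r → Ideal (integralClosure O K))
    (hvmul : ∀ (i : Fin r) (x y : K), x ≠ 0 → y ≠ 0 → v i (x * y) = v i x + v i y)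
    (hvsurj : ∀ (i : Fin r) (n : ℤ), ∃ x : K, x ≠ 0 ∧ v i x = n)
    (ht : ∀ i : Fin r, ∃ t : integralClosure O K, (t : K) ≠ 0 ∧ v i (t : K) = 0 ∧
      ∀ j, j ≠ i → 1 ≤ v j (t : K))
    (w : Fin r → ℤ) :
    ∃ z : K, z ≠ 0 ∧ ∀ j, w j ≤ v j z := by
  rcases Nat.eq_zero_or_pos r with hr | hr
  · subst hr; exact ⟨1, one_ne_zero, fun j => j.elim0⟩
  · obtain ⟨z, hz0, hzi, hzj⟩ := aux_exists_exact v M hvmul hvsurj ⟨0, hr⟩ (ht ⟨0, hr⟩)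
      (w ⟨0, hr⟩) w
    refine ⟨z, hz0, fun j => ?_⟩
    by_cases hj : j = ⟨0, hr⟩
    · rw [hj, hzi]
    · exact hzj j hj

lemma aux_conductor (hfin : Module.Finite O (integralClosure O K)) :
    ∃ f ∈ nonZeroDivisors O, ∀ z : K, z ∈ integralClosure O K →
      f • z ∈ (1 : Submodule O K) := by
  obtain ⟨S, hS⟩ := Module.finite_def.mp hfin
  obtain ⟨f, hf⟩ := IsLocalization.exist_integer_multiples (nonZeroDivisors O) S
    (fun s : integralClosure O K => (s : K))
  refine ⟨(f : O), f.2, ?_⟩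
  have key : ∀ u : integralClosure O K, (f : O) • (u : K) ∈ (1 : Submodule O K) := by
    intro u
    have hu : u ∈ Submodule.span O (S : Set (integralClosure O K)) := hS ▸ Submodule.mem_top
    induction hu using Submodule.span_induction with
    | mem x hx =>
        obtain ⟨y, hy⟩ := hf x hx
        exact Submodule.mem_one.mpr ⟨y, hy⟩
    | zero => simp
    | add x y hx hy ihx ihy => rw [show ((x + y : integralClosure O K) : K) = (x : K) + (y : K) from rfl, smul_add]; exact Submodule.add_mem _ ihx ihy
    | smul o x hx ih =>
        have : ((o • x : integralClosure O K) : K) = o • (x : K) := rfl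
        rw [this, smul_comm]
        exact Submodule.smul_mem _ _ ih
  intro z hz
  exact key ⟨z, hz⟩

lemma aux_J_frac (v : Fin r → K → ℤ)
    (hvmul : ∀ (i : Fin r) (x y : K), x ≠ 0 → y ≠ 0 → v i (x * y) = v i x + v i y)
    (hvint : ∀ x : K, x ≠ 0 → (x ∈ integralClosure O K ↔ ∀ i, 0 ≤ v i x))
    (J : Submodule O K → (Fin r → ℤ) → Submodule O K)
    (hJ : ∀ (a : Submodule O K) (w : Fin r → ℤ) (z : K),
      z ∈ J a w ↔ z ∈ a ∧ (z = 0 ∨ ∀ i, w i ≤ v i z))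
    (hge : ∀ w : Fin r → ℤ, ∃ z : K, z ≠ 0 ∧ ∀ j, w j ≤ v j z)
    (hcond : ∃ f ∈ nonZeroDivisors O, ∀ z : K, z ∈ integralClosure O K →
      f • z ∈ (1 : Submodule O K))
    (w : Fin r → ℤ) : IsFracIdeal (J ⊤ w) := by
  obtain ⟨f, hf, hfc⟩ := hcond
  obtain ⟨z, hz0, hzw⟩ := hge w
  constructor
  · intro hbot
    have : z ∈ J ⊤ w := (hJ ⊤ w z).mpr ⟨trivial, Or.inr hzw⟩
    rw [hbot, Submodule.mem_bot] at this
    exact hz0 this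
  · obtain ⟨z0, hz00, hz0w⟩ := hge (fun j => max (-(w j)) 0)
    have hz0int : z0 ∈ integralClosure O K := by
      rw [hvint z0 hz00]
      intro j
      have := hz0w j
      omega
    have hmem1 := hfc z0 hz0int
    rw [Submodule.mem_one] at hmem1
    obtain ⟨q, hq⟩ := hmem1
    have hfK : algebraMap O K f ≠ 0 :=
      IsFractionRing.to_map_ne_zero_of_mem_nonZeroDivisors hf
    have hqK : algebraMap O K q ≠ 0 := by
      rw [hq, Algebra.smul_def]
      exact mul_ne_zero hfK hz00
    have hq0 : q ≠ 0 := fun h => hqK (by rw [h, map_zero])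
    refine ⟨f * q, mul_mem hf (mem_nonZeroDivisors_of_ne_zero hq0), ?_⟩
    intro zz hzz
    rcases eq_or_ne zz 0 with rfl | hzz0
    · rw [smul_zero]; exact Submodule.zero_mem _
    · have hvzz : ∀ j, w j ≤ v j zz := by
        rcases ((hJ ⊤ w zz).mp hzz).2 with h | h
        · exact absurd h hzz0
        · exact h
      rw [mul_smul]
      have hqzz : q • zz ∈ integralClosure O K := by
        have hne : q • zz ≠ 0 := by
          rw [Algebra.smul_def]; exact mul_ne_zero hqK hzz0
        rw [hvint _ hne]
        intro j
        have e1 : q • zz = (algebraMap O K f * z0) * zz := by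
          rw [Algebra.smul_def, hq, Algebra.smul_def]
        have hfz0 : algebraMap O K f * z0 ≠ 0 := mul_ne_zero hfK hz00
        rw [e1, hvmul j _ _ hfz0 hzz0, hvmul j _ _ hfK hz00]
        have h1 : 0 ≤ v j (algebraMap O K f) := by
          refine ((hvint _ hfK).mp ?_) j
          exact isIntegral_algebraMap
        have h2 := hz0w j
        have h3 := hvzz j
        omega
      exact hfc _ hqzz

lemma aux_J_zero (v : Fin r → K → ℤ)
    (hvint : ∀ x : K, x ≠ 0 → (x ∈ integralClosure O K ↔ ∀ i, 0 ≤ v i x))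
    (J : Submodule O K → (Fin r → ℤ) → Submodule O K)
    (hJ : ∀ (a : Submodule O K) (w : Fin r → ℤ) (z : K),
      z ∈ J a w ↔ z ∈ a ∧ (z = 0 ∨ ∀ i, w i ≤ v i z)) :
    J ⊤ 0 = Subalgebra.toSubmodule (integralClosure O K) := by
  ext x
  rw [hJ, Subalgebra.mem_toSubmodule]
  constructor
  · rintro ⟨-, h | h⟩
    · rw [h]; exact Subalgebra.zero_mem _
    · rcases eq_or_ne x 0 with rfl | hx0
      · exact Subalgebra.zero_mem _
      · exact (hvint x hx0).mpr h
  · intro hx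
    refine ⟨trivial, ?_⟩
    rcases eq_or_ne x 0 with rfl | hx0
    · exact Or.inl rfl
    · exact Or.inr ((hvint x hx0).mp hx)

lemma aux_dual (v : Fin r → K → ℤ)
    (hvmul : ∀ (i : Fin r) (x y : K), x ≠ 0 → y ≠ 0 → v i (x * y) = v i x + v i y)
    (hvint : ∀ x : K, x ≠ 0 → (x ∈ integralClosure O K ↔ ∀ i, 0 ≤ v i x))
    (J : Submodule O K → (Fin r → ℤ) → Submodule O K)
    (hJ : ∀ (a : Submodule O K) (w : Fin r → ℤ) (z : K),
      z ∈ J a w ↔ z ∈ a ∧ (z = 0 ∨ ∀ i, w i ≤ v i z))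
    (hexact : ∀ (i : Fin r) (m : ℤ) (bound : Fin r → ℤ),
      ∃ z : K, z ≠ 0 ∧ v i z = m ∧ ∀ j, j ≠ i → bound j ≤ v j z)
    (c : Submodule O K)
    (hcO : c / (Subalgebra.toSubmodule (integralClosure O K) : Submodule O K) =
      Subalgebra.toSubmodule (integralClosure O K))
    (w : Fin r → ℤ) : c / J ⊤ w = J ⊤ (-w) := by
  set OB : Submodule O K := Subalgebra.toSubmodule (integralClosure O K) with hOBdef
  have hOBc : OB ≤ c := by
    intro u hu
    rw [← hcO] at hu
    have := Submodule.mem_div_iff_forall_mul_mem.mp hu 1 (Subalgebra.one_mem _)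
    rwa [mul_one] at this
  have hJmem : ∀ (ww : Fin r → ℤ) (x : K), x ∈ J ⊤ ww ↔ (x = 0 ∨ ∀ j, ww j ≤ v j x) := by
    intro ww x
    rw [hJ]
    simp
  apply le_antisymm
  · -- c / J w ≤ J (-w)
    intro x hx
    rcases eq_or_ne x 0 with rfl | hx0
    · exact ((hJmem _ 0).mpr (Or.inl rfl))
    · refine (hJmem _ x).mpr (Or.inr fun i => ?_)
      -- x * (J w) ⊆ OB
      have hstep : ∀ y ∈ J ⊤ w, x * y ∈ OB := by
        intro y hy
        rw [← hcO]
        rw [Submodule.mem_div_iff_forall_mul_mem]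
        intro b hb
        have hyb : y * b ∈ J ⊤ w := by
          rcases eq_or_ne y 0 with rfl | hy0
          · rw [zero_mul]; exact Submodule.zero_mem _
          · rcases eq_or_ne b 0 with rfl | hb0
            · rw [mul_zero]; exact Submodule.zero_mem _
            · refine (hJmem w _).mpr (Or.inr fun j => ?_)
              rw [hvmul j y b hy0 hb0]
              have h1 : 0 ≤ v j b := (hvint b hb0).mp hb j
              have h2 : w j ≤ v j y := by
                rcases (hJmem w y).mp hy with h | h
                · exact absurd h hy0
                · exact h j
              omega
        have := Submodule.mem_div_iff_forall_mul_mem.mp hx (y * b) hyb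
        rwa [← mul_assoc] at this
      obtain ⟨z, hz0, hzi, hzj⟩ := hexact i (w i) w
      have hzJ : z ∈ J ⊤ w := by
        refine (hJmem w z).mpr (Or.inr fun j => ?_)
        rcases eq_or_ne j i with rfl | hji
        · omega
        · exact hzj j hji
      have hxz : x * z ∈ OB := hstep z hzJ
      have hxz0 : x * z ≠ 0 := mul_ne_zero hx0 hz0
      have := (hvint _ hxz0).mp hxz i
      rw [hvmul i x z hx0 hz0] at this
      simp only [Pi.neg_apply]
      omega
  · -- J (-w) ≤ c / J w
    intro x hx
    rw [Submodule.mem_div_iff_forall_mul_mem]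
    intro y hy
    rcases eq_or_ne x 0 with rfl | hx0
    · rw [zero_mul]; exact Submodule.zero_mem _
    rcases eq_or_ne y 0 with rfl | hy0
    · rw [mul_zero]; exact Submodule.zero_mem _
    apply hOBc
    have hvx : ∀ j, -(w j) ≤ v j x := by
      rcases (hJmem _ x).mp hx with h | h
      · exact absurd h hx0
      · intro j; have := h j; simpa using this
    have hvy : ∀ j, w j ≤ v j y := by
      rcases (hJmem w y).mp hy with h | h
      · exact absurd h hy0
      · exact h
    show x * y ∈ Subalgebra.toSubmodule (integralClosure O K)
    rw [Subalgebra.mem_toSubmodule]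
    refine (hvint _ (mul_ne_zero hx0 hy0)).mpr fun j => ?_
    rw [hvmul j x y hx0 hy0]
    have := hvx j; have := hvy j
    omega

end Aux

section AuxK

variable {k O K : Type} [Field k] [CommRing O] [IsDomain O] [Algebra k O]
  [Field K] [Algebra O K] [IsFractionRing O K] [Algebra k K] [IsScalarTower k O K]
variable {r : ℕ}

lemma aux_qdim_step (v : Fin r → K → ℤ)
    (M : Fin r → Ideal (integralClosure O K))
    (hMmax : ∀ i, (M i).IsMaximal)
    (hvmul : ∀ (i : Fin r) (x y : K), x ≠ 0 → y ≠ 0 → v i (x * y) = v i x + v i y)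
    (hvint : ∀ x : K, x ≠ 0 → (x ∈ integralClosure O K ↔ ∀ i, 0 ≤ v i x))
    (hvmax : ∀ (i : Fin r) (x : K) (hx : x ∈ integralClosure O K), x ≠ 0 →
      ((⟨x, hx⟩ : integralClosure O K) ∈ M i ↔ 1 ≤ v i x))
    (J : Submodule O K → (Fin r → ℤ) → Submodule O K)
    (hJ : ∀ (a : Submodule O K) (w : Fin r → ℤ) (z : K),
      z ∈ J a w ↔ z ∈ a ∧ (z = 0 ∨ ∀ i, w i ≤ v i z))
    (w : Fin r → ℤ) (i : Fin r)
    (z : K) (hz0 : z ≠ 0) (hzi : v i z = w i) (hzge : ∀ j, w j ≤ v j z)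
    (t : integralClosure O K) (ht0 : (t : K) ≠ 0) (hti : v i (t : K) = 0)
    (htj : ∀ j, j ≠ i → 1 ≤ v j (t : K)) :
    qdim k (J ⊤ w) (J ⊤ (w + Pi.single i 1)) =
      Module.finrank k ((integralClosure O K) ⧸ M i) := by
  classical
  set A : Submodule O K := J ⊤ w with hA
  set B : Submodule O K := J ⊤ (w + Pi.single i 1) with hB
  -- basic membership characterizations
  have hmemA : ∀ x : K, x ∈ A ↔ (x = 0 ∨ ∀ j, w j ≤ v j x) := by
    intro x; rw [hA, hJ]; simp
  have hmemB : ∀ x : K, x ∈ B ↔ (x = 0 ∨ (w i + 1 ≤ v i x ∧ ∀ j, w j ≤ v j x)) := by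
    intro x; rw [hB, hJ]
    constructor
    · rintro ⟨-, h | h⟩
      · exact Or.inl h
      · refine Or.inr ⟨?_, fun j => ?_⟩
        · have := h i; simpa using this
        · rcases eq_or_ne j i with rfl | hji
          · have := h j; simp at this; omega
          · have := h j; simpa [Pi.single_eq_of_ne hji] using this
    · rintro (h | ⟨h1, h2⟩)
      · exact ⟨trivial, Or.inl h⟩
      · refine ⟨trivial, Or.inr fun j => ?_⟩
        rcases eq_or_ne j i with rfl | hji
        · simpa using h1
        · simpa [Pi.single_eq_of_ne hji] using h2 j
  -- z * u ∈ A for u in the integral closure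
  have hzu : ∀ u : (integralClosure O K), z * (u : K) ∈ A := by
    intro u
    rcases eq_or_ne (u : K) 0 with h | h
    · rw [h, mul_zero]; exact A.zero_mem
    · refine (hmemA _).mpr (Or.inr fun j => ?_)
      rw [hvmul j z _ hz0 h]
      have h0 : 0 ≤ v j (u : K) := (hvint _ h).mp u.2 j
      have := hzge j; omega
  unfold qdim
  set Ck : Submodule k ↥(Submodule.restrictScalars k A) :=
    Submodule.comap (Submodule.restrictScalars k A).subtype (Submodule.restrictScalars k B)
    with hCk
  -- the k-linear map g : (integralClosure O K) →ₗ[k] A/B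
  set g : (integralClosure O K) →ₗ[k] (↥(Submodule.restrictScalars k A) ⧸ Ck) :=
    { toFun := fun u => Submodule.Quotient.mk ⟨z * (u : K), hzu u⟩
      map_add' := by
        intro x y
        rw [← Submodule.Quotient.mk_add]
        exact congrArg Submodule.Quotient.mk (Subtype.ext (by push_cast; ring))
      map_smul' := by
        intro c x
        rw [RingHom.id_apply, ← Submodule.Quotient.mk_smul]
        refine congrArg Submodule.Quotient.mk (Subtype.ext ?_)
        show z * ((c • x : (integralClosure O K)) : K) = c • (z * (x : K))
        rw [show ((c • x : (integralClosure O K)) : K) = c • (x : K) from rfl, mul_smul_comm] } with hg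
  -- inverse of v
  have hvdiv : ∀ (j : Fin r) (x y : K), x ≠ 0 → y ≠ 0 → v j (x / y) = v j x - v j y := by
    intro j x y hx hy
    have h1 : v j 1 = 0 := by
      have h := hvmul j 1 1 one_ne_zero one_ne_zero; rw [mul_one] at h; omega
    have h2 := hvmul j (x / y) y (div_ne_zero hx hy) hy
    rw [div_mul_cancel₀ _ hy] at h2
    omega
  -- kernel of g
  have hker : LinearMap.ker g = Submodule.restrictScalars k (M i : Submodule (integralClosure O K) (integralClosure O K)) := by
    ext u
    rw [LinearMap.mem_ker, Submodule.restrictScalars_mem]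
    have : g u = 0 ↔ z * (u : K) ∈ B := by
      rw [hg]
      show Submodule.Quotient.mk _ = 0 ↔ _
      rw [Submodule.Quotient.mk_eq_zero]
      exact Iff.rfl
    rw [this]
    rcases eq_or_ne (u : K) 0 with h0 | h0
    · have hu0 : u = 0 := by exact_mod_cast ZeroMemClass.coe_eq_zero.mp h0
      subst hu0
      simp [B.zero_mem, (M i).zero_mem, h0]
    · have hzu0 : z * (u : K) ≠ 0 := mul_ne_zero hz0 h0
      have hu0 : 0 ≤ v i (u : K) := (hvint _ h0).mp u.2 i
      rw [hmemB]
      constructor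
      · rintro (h | ⟨h1, -⟩)
        · exact absurd h hzu0
        · rw [hvmul i z _ hz0 h0, hzi] at h1
          exact (hvmax i (u : K) u.2 h0).mpr (by omega)
      · intro hu
        have h1 : 1 ≤ v i (u : K) := (hvmax i (u : K) u.2 h0).mp hu
        refine Or.inr ⟨?_, fun j => ?_⟩
        · rw [hvmul i z _ hz0 h0, hzi]; omega
        · rw [hvmul j z _ hz0 h0]
          have := hzge j
          have h2 : 0 ≤ v j (u : K) := (hvint _ h0).mp u.2 j
          omega
  -- surjectivity of g
  have hsurj : Function.Surjective g := by
    intro q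
    obtain ⟨y, rfl⟩ := Submodule.Quotient.mk_surjective _ q
    have hyA : (y : K) ∈ A := y.2
    by_cases hyB : (y : K) ∈ B
    · refine ⟨0, ?_⟩
      rw [map_zero]
      exact ((Submodule.Quotient.mk_eq_zero Ck).mpr (Submodule.mem_comap.mpr hyB)).symm
    · have hy0 : (y : K) ≠ 0 := fun h => hyB ((hmemB _).mpr (Or.inl h))
      have hvy : ∀ j, w j ≤ v j (y : K) := by
        rcases (hmemA _).mp hyA with h | h
        · exact absurd h hy0
        · exact h
      -- inverse s of t modulo M i
      have htMi : t ∉ M i := fun h => by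
        have := (hvmax i (t : K) t.2 ht0).mp h; omega
      obtain ⟨s, m, hm, hstm⟩ := (hMmax i).exists_inv htMi
      have hs0 : (s : K) ≠ 0 := by
        intro h
        have hsR : s = 0 := by exact_mod_cast ZeroMemClass.coe_eq_zero.mp h
        rw [hsR, zero_mul, zero_add] at hstm
        exact (hMmax i).ne_top ((Ideal.eq_top_iff_one _).mpr (hstm ▸ hm))
      have hsMi : s ∉ M i := fun h =>
        (hMmax i).ne_top ((Ideal.eq_top_iff_one _).mpr
          (hstm ▸ add_mem (Ideal.mul_mem_right t _ h) hm))
      have hsi : v i (s : K) = 0 := by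
        have h1 : 0 ≤ v i (s : K) := (hvint _ hs0).mp s.2 i
        have h2 : ¬ 1 ≤ v i (s : K) := fun h => hsMi ((hvmax i (s : K) s.2 hs0).mpr h)
        omega
      have hsge : ∀ j, 0 ≤ v j (s : K) := (hvint _ hs0).mp s.2
      have htge : ∀ j, 0 ≤ v j (t : K) := (hvint _ ht0).mp t.2
      set N : ℕ := ∑ j, (v j z - v j (y : K)).natAbs with hNdef
      set D : (integralClosure O K) := (t * s) ^ N - 1 with hD
      have hDM : D ∈ M i := by
        have h1 : Ideal.Quotient.mk (M i) (t * s) = Ideal.Quotient.mk (M i) 1 := by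
          rw [Ideal.Quotient.eq]
          have : t * s - 1 = -m := by
            have : s * t + m = 1 := hstm
            linear_combination this
          rw [this]
          exact (M i).neg_mem hm
        have h2 : Ideal.Quotient.mk (M i) ((t * s) ^ N) = Ideal.Quotient.mk (M i) 1 := by
          rw [map_pow, h1, ← map_pow, one_pow]
        rw [hD]
        exact (Ideal.Quotient.eq).mp h2
      have htsK : ((t : K) * (s : K)) ≠ 0 := mul_ne_zero ht0 hs0
      have htsN : ((t : K) * (s : K)) ^ N ≠ 0 := pow_ne_zero _ htsK
      have hyz0 : (y : K) / z ≠ 0 := div_ne_zero hy0 hz0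
      set u : K := ((y : K) / z) * ((t : K) * (s : K)) ^ N with hu
      have hu0 : u ≠ 0 := mul_ne_zero hyz0 htsN
      have hvts : ∀ j, v j ((t : K) * (s : K)) = v j (t : K) + v j (s : K) :=
        fun j => hvmul j _ _ ht0 hs0
      have hvu : ∀ j, v j u = (v j (y : K) - v j z) + (N : ℤ) * (v j (t : K) + v j (s : K)) := by
        intro j
        rw [hu, hvmul j _ _ hyz0 htsN, aux_vpow' v hvmul j _ htsK, hvts, hvdiv j _ _ hy0 hz0]
      have huR : u ∈ integralClosure O K := by
        rw [hvint u hu0]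
        intro j
        rw [hvu j]
        rcases eq_or_ne j i with rfl | hji
        · rw [hti, hsi, hzi]
          have := hvy j
          omega
        · have h1 : 1 ≤ v j (t : K) := htj j hji
          have h2 : 0 ≤ v j (s : K) := hsge j
          have h3 : (v j z - v j (y : K)) ≤ (N : ℤ) := by
            have h4 : (v j z - v j (y : K)).natAbs ≤ N := Finset.single_le_sum
              (f := fun j => (v j z - v j (y : K)).natAbs) (fun _ _ => Nat.zero_le _)
              (Finset.mem_univ j)
            exact le_trans Int.le_natAbs (by exact_mod_cast h4)
          nlinarith [Int.ofNat_nonneg N]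
      refine ⟨⟨u, huR⟩, ?_⟩
      rw [hg]
      show Submodule.Quotient.mk _ = Submodule.Quotient.mk y
      rw [Submodule.Quotient.eq]
      have hmem : z * u - (y : K) ∈ B := by
        have hzuy : z * u - (y : K) = (y : K) * ((D : (integralClosure O K)) : K) := by
          rw [hu, hD]
          push_cast
          field_simp
        rw [hzuy]
        rcases eq_or_ne ((D : (integralClosure O K)) : K) 0 with hDK | hDK
        · rw [hDK, mul_zero]; exact B.zero_mem
        · refine (hmemB _).mpr (Or.inr ⟨?_, fun j => ?_⟩)
          · rw [hvmul i _ _ hy0 hDK]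
            have h1 : 1 ≤ v i ((D : (integralClosure O K)) : K) := (hvmax i _ D.2 hDK).mp hDM
            have := hvy i
            omega
          · rw [hvmul j _ _ hy0 hDK]
            have h1 : 0 ≤ v j ((D : (integralClosure O K)) : K) := (hvint _ hDK).mp D.2 j
            have := hvy j
            omega
      exact hmem
  -- assemble
  have e1 := (g.quotKerEquivOfSurjective hsurj).symm
  rw [hker] at e1
  have e2 := Submodule.Quotient.restrictScalarsEquiv k (M i : Submodule (integralClosure O K) (integralClosure O K))
  rw [e1.finrank_eq, e2.finrank_eq]

end AuxK

theorem statement_16 (k O K : Type) [Field k] [PerfectField k]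
    [CommRing O] [IsDomain O] [IsNoetherianRing O] [IsLocalRing O] [Algebra k O]
    [Field K] [Algebra O K] [IsFractionRing O K] [Algebra k K] [IsScalarTower k O K]
    (hdim : ringKrullDim O = 1)
    (hfin : Module.Finite O (integralClosure O K))
    (OB : Submodule O K) (hOB : OB = Subalgebra.toSubmodule (integralClosure O K))
    (r : ℕ) (M : Fin r → Ideal (integralClosure O K))
    (hMmax : ∀ i, (M i).IsMaximal)
    (hMinj : Function.Injective M)
    (hMall : ∀ P : Ideal (integralClosure O K), P.IsMaximal → ∃ i, P = M i)
    (v : Fin r → K → ℤ)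
    (hvmul : ∀ (i : Fin r) (x y : K), x ≠ 0 → y ≠ 0 → v i (x * y) = v i x + v i y)
    (hvadd : ∀ (i : Fin r) (x y : K), x ≠ 0 → y ≠ 0 → x + y ≠ 0 →
      min (v i x) (v i y) ≤ v i (x + y))
    (hvsurj : ∀ (i : Fin r) (n : ℤ), ∃ x : K, x ≠ 0 ∧ v i x = n)
    (hvint : ∀ x : K, x ≠ 0 → (x ∈ integralClosure O K ↔ ∀ i, 0 ≤ v i x))
    (hvmax : ∀ (i : Fin r) (x : K) (hx : x ∈ integralClosure O K), x ≠ 0 →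
      ((⟨x, hx⟩ : integralClosure O K) ∈ M i ↔ 1 ≤ v i x))
    (d : Fin r → ℕ) (hd : ∀ i, d i = Module.finrank k ((integralClosure O K) ⧸ M i))
    (J : Submodule O K → (Fin r → ℤ) → Submodule O K)
    (hJ : ∀ (a : Submodule O K) (w : Fin r → ℤ) (z : K),
      z ∈ J a w ↔ z ∈ a ∧ (z = 0 ∨ ∀ i, w i ≤ v i z))
    (deg : Submodule O K → ℤ)
    (hdeg0 : deg 1 = 0)
    (hdegd : ∀ a b : Submodule O K, IsFracIdeal a → IsFracIdeal b → b ≤ a →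
      deg a - deg b = qdim k a b)
    (c : Submodule O K) (hc : IsCanonicalIdeal c) (hcO : c / OB = OB) :
    ∀ w : Fin r → ℤ,
      c / J (⊤ : Submodule O K) w = J (⊤ : Submodule O K) (-w) ∧
      deg (J (⊤ : Submodule O K) w) = (qdim k OB 1 : ℤ) - ∑ i, (d i : ℤ) * w i := by
  classical
  subst hOB
  have ht : ∀ i : Fin r, ∃ t : integralClosure O K, (t : K) ≠ 0 ∧ v i (t : K) = 0 ∧
      ∀ j, j ≠ i → 1 ≤ v j (t : K) :=
    fun i => aux_exists_t v M hMmax hMinj hvint hvmax i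
  have hexact : ∀ (i : Fin r) (m : ℤ) (bound : Fin r → ℤ),
      ∃ z : K, z ≠ 0 ∧ v i z = m ∧ ∀ j, j ≠ i → bound j ≤ v j z :=
    fun i m bound => aux_exists_exact v M hvmul hvsurj i (ht i) m bound
  have hge : ∀ w : Fin r → ℤ, ∃ z : K, z ≠ 0 ∧ ∀ j, w j ≤ v j z :=
    aux_exists_ge v M hvmul hvsurj ht
  have hcond := aux_conductor (O := O) (K := K) hfin
  have hfrac : ∀ w : Fin r → ℤ, IsFracIdeal (J ⊤ w) :=
    aux_J_frac v hvmul hvint J hJ hge hcond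
  have hJ0 : J ⊤ 0 = Subalgebra.toSubmodule (integralClosure O K) := aux_J_zero v hvint J hJ
  set OBs : Submodule O K := Subalgebra.toSubmodule (integralClosure O K) with hOBs
  have hfracOB : IsFracIdeal OBs := by
    constructor
    · intro h
      have h1 : (1 : K) ∈ OBs := Subalgebra.one_mem _
      rw [h, Submodule.mem_bot] at h1
      exact one_ne_zero h1
    · obtain ⟨f, hf, hfc⟩ := hcond
      exact ⟨f, hf, fun z hz => hfc z hz⟩
  have hfrac1 : IsFracIdeal (1 : Submodule O K) := by
    constructor
    · intro h
      have h1 : (1 : K) ∈ (1 : Submodule O K) := Submodule.mem_one.mpr ⟨1, map_one _⟩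
      rw [h, Submodule.mem_bot] at h1
      exact one_ne_zero h1
    · exact ⟨1, Submonoid.one_mem _, fun z hz => by simpa using hz⟩
  have h1le : (1 : Submodule O K) ≤ OBs := by
    intro x hx
    rw [Submodule.mem_one] at hx
    obtain ⟨y, rfl⟩ := hx
    exact (Subalgebra.mem_toSubmodule _).mpr isIntegral_algebraMap
  have hbase : deg (J ⊤ 0) = (qdim k OBs 1 : ℤ) := by
    have h := hdegd OBs 1 hfracOB hfrac1 h1le
    rw [hdeg0, sub_zero] at h
    rw [hJ0]; exact h
  have hstep : ∀ (w : Fin r → ℤ) (i : Fin r),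
      deg (J ⊤ w) - deg (J ⊤ (w + Pi.single i 1)) = (d i : ℤ) := by
    intro w i
    obtain ⟨z, hz0, hzi, hzj⟩ := hexact i (w i) w
    have hzge : ∀ j, w j ≤ v j z := by
      intro j
      rcases eq_or_ne j i with rfl | hji
      · omega
      · exact hzj j hji
    obtain ⟨t, ht0, hti, htj⟩ := ht i
    have hq : qdim k (J ⊤ w) (J ⊤ (w + Pi.single i 1)) =
        Module.finrank k ((integralClosure O K) ⧸ M i) :=
      aux_qdim_step v M hMmax hvmul hvint hvmax J hJ w i z hz0 hzi hzge t ht0 hti htj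
    have hle : J ⊤ (w + Pi.single i 1) ≤ J ⊤ w := by
      intro x hx
      rcases ((hJ _ _ x).mp hx).2 with h | h
      · exact (hJ _ _ x).mpr ⟨trivial, Or.inl h⟩
      · refine (hJ _ _ x).mpr ⟨trivial, Or.inr fun j => ?_⟩
        have := h j
        rcases eq_or_ne j i with rfl | hji
        · simp only [Pi.add_apply, Pi.single_eq_same] at this
          omega
        · simpa [Pi.single_eq_of_ne hji] using this
    have h := hdegd (J ⊤ w) (J ⊤ (w + Pi.single i 1)) (hfrac w) (hfrac _) hle
    rw [h, hq, ← hd i]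
  have hsum_single : ∀ (w : Fin r → ℤ) (i : Fin r),
      ∑ j, (d j : ℤ) * ((w + Pi.single i 1) : Fin r → ℤ) j = (∑ j, (d j : ℤ) * w j) + d i := by
    intro w i
    rw [← Finset.sum_erase_add _ _ (Finset.mem_univ i),
      ← Finset.sum_erase_add _ (fun j => (d j : ℤ) * w j) (Finset.mem_univ i)]
    have hcongr : ∀ j ∈ Finset.univ.erase i,
        (d j : ℤ) * ((w + Pi.single i 1) : Fin r → ℤ) j = (d j : ℤ) * w j := by
      intro j hj
      rw [Pi.add_apply, Pi.single_eq_of_ne (Finset.mem_erase.mp hj).1, add_zero]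
    rw [Finset.sum_congr rfl hcongr, Pi.add_apply, Pi.single_eq_same]
    ring
  have main : ∀ (n : ℕ) (w : Fin r → ℤ), (∑ j, (w j).natAbs) = n →
      deg (J ⊤ w) = (qdim k OBs 1 : ℤ) - ∑ i, (d i : ℤ) * w i := by
    intro n
    induction n using Nat.strong_induction_on with
    | _ n ih =>
      intro w hw
      by_cases h0 : ∀ j, w j = 0
      · have hw0 : w = 0 := funext h0
        subst hw0
        rw [hbase]
        simp
      · push_neg at h0
        obtain ⟨i, hi⟩ := h0
        have hsplit : ∀ u : Fin r → ℤ,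
            ∑ j, (u j).natAbs = (∑ j ∈ Finset.univ.erase i, (u j).natAbs) + (u i).natAbs :=
          fun u => (Finset.sum_erase_add _ _ (Finset.mem_univ i)).symm
        rcases lt_or_gt_of_ne hi with hneg | hpos
        · -- w i < 0 : use w + single i 1
          have herase : ∑ j ∈ Finset.univ.erase i,
                (((w + Pi.single i 1) : Fin r → ℤ) j).natAbs =
              ∑ j ∈ Finset.univ.erase i, (w j).natAbs :=
            Finset.sum_congr rfl fun j hj => by
              rw [Pi.add_apply, Pi.single_eq_of_ne (Finset.mem_erase.mp hj).1, add_zero]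
          have hlt : (∑ j, (((w + Pi.single i 1) : Fin r → ℤ) j).natAbs) < n := by
            rw [hsplit _, herase, Pi.add_apply, Pi.single_eq_same]
            rw [hsplit w] at hw
            omega
          have hih := ih _ hlt _ rfl
          have hs := hstep w i
          have hsum := hsum_single w i
          rw [hih] at hs
          omega
        · -- w i > 0 : use w - single i 1
          have hww : (w - Pi.single i 1) + Pi.single i 1 = w := by
            funext j; simp
          have herase : ∑ j ∈ Finset.univ.erase i,
                (((w - Pi.single i 1) : Fin r → ℤ) j).natAbs =
              ∑ j ∈ Finset.univ.erase i, (w j).natAbs :=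
            Finset.sum_congr rfl fun j hj => by
              rw [Pi.sub_apply, Pi.single_eq_of_ne (Finset.mem_erase.mp hj).1, sub_zero]
          have hlt : (∑ j, (((w - Pi.single i 1) : Fin r → ℤ) j).natAbs) < n := by
            rw [hsplit _, herase, Pi.sub_apply, Pi.single_eq_same]
            rw [hsplit w] at hw
            omega
          have hih := ih _ hlt _ rfl
          have hs := hstep (w - Pi.single i 1) i
          have hsum := hsum_single (w - Pi.single i 1) i
          rw [hww] at hs hsum
          rw [hih] at hs
          omega
  intro w
  constructor
  · exact aux_dual v hvmul hvint J hJ hexact c hcO w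
  · exact main (∑ j, (w j).natAbs) w rfl
end
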